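/- arXiv:2003.06267 — 2 statements merged into one kernel-verified Lean document; each statement's English description precedes it below -/
import Mathlib

section
/- There is at most one map of realisations between extremal realisations: if ρ and ρ' are extremal realisations of a family of configurations F and f, f' : ρ → ρ' are maps of realisations, then f = f'. -/
universe u v w

/-- The image of a set under a partial function. -/
def pimage {α : Type u} {β : Type v} (f : α → Option β) (x : Set α) : Set β :=
  {b | ∃ a ∈ x, f a = some b}

/-- A family of configurations over the set of events `A`:
a non-empty family of subsets, whose underlying set is all of `A`,
closed under unions of finitely compatible subfamilies,
and satisfying the securing-chain condition. -/
structure ConfigFamily (A : Type u) where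
  F : Set (Set A)
  nonempty : F.Nonempty
  covers : ∀ a : A, ∃ x ∈ F, a ∈ x
  unionClosed : ∀ X ⊆ F, (∀ Y ⊆ X, Y.Finite → ∃ z ∈ F, ∀ y ∈ Y, y ⊆ z) → ⋃₀ X ∈ F
  secured : ∀ x ∈ F, ∀ e ∈ x, ∃ l : List A, l ≠ [] ∧ l.getLast? = some e ∧
    (∀ a ∈ l, a ∈ x) ∧ ∀ i, 0 < i → i ≤ l.length → {a | a ∈ l.take i} ∈ F

/-- A causal realisation of the family `C`: a partial order whose
principal lower sets are finite, together with a function to events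
sending every down-closed subset to a configuration of the family. -/
structure Realisation {A : Type u} (C : ConfigFamily A) where
  carrier : Type u
  le : carrier → carrier → Prop
  le_refl : ∀ a, le a a
  le_trans : ∀ a b c, le a b → le b c → le a c
  le_antisymm : ∀ a b, le a b → le b a → a = b
  finPast : ∀ e, {e' | le e' e}.Finite
  ρ : carrier → A
  real : ∀ x : Set carrier, (∀ a ∈ x, ∀ b, le b a → b ∈ x) → ρ '' x ∈ C.F

namespace Realisation

variable {A : Type u} {C : ConfigFamily A}

/-- Down-closed subsets of the carrier of a realisation. -/
def IsDown (r : Realisation C) (x : Set r.carrier) : Prop :=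
  ∀ a ∈ x, ∀ b, r.le b a → b ∈ x

/-- The set `[a) = [a] \ {a}` of strict predecessors. -/
def spred (r : Realisation C) (a : r.carrier) : Set r.carrier :=
  {b | r.le b a ∧ b ≠ a}

/-- The carrier has a top element. -/
def HasTop (r : Realisation C) : Prop := ∃ t, ∀ a, r.le a t

end Realisation

/-- A map of realisations: a partial surjective function between the carriers,
preserving down-closed subsets and commuting with the functions to events. -/
structure RealMap {A : Type u} {C : ConfigFamily A} (r r' : Realisation C) where
  f : r.carrier → Option r'.carrier
  surj : ∀ b, ∃ a, f a = some b
  presDown : ∀ x, r.IsDown x → r'.IsDown (pimage f x)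
  commutes : ∀ a b, f a = some b → r.ρ a = r'.ρ b

namespace RealMap

variable {A : Type u} {C : ConfigFamily A} {r r' r₀ : Realisation C}

/-- The map is total. -/
def IsTotal (m : RealMap r r') : Prop := ∀ a, ∃ b, m.f a = some b

/-- The map is an isomorphism of realisations: it has an inverse map of
realisations, given by the inverse relation. -/
def IsIso (m : RealMap r r') : Prop :=
  ∃ m' : RealMap r' r, ∀ a b, m.f a = some b ↔ m'.f b = some a

/-- `m : r → r₀` is a projection witnessed by `g`: `g` realises the carrier of
`r₀` as a subset of the carrier of `r` with the restricted order and restricted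
function to events, and `m` is the inverse relation of this inclusion. -/
def IsProjectionVia (m : RealMap r r₀) (g : r₀.carrier → r.carrier) : Prop :=
  Function.Injective g ∧ (∀ a b, r₀.le a b ↔ r.le (g a) (g b)) ∧
    (∀ a, r₀.ρ a = r.ρ (g a)) ∧ (∀ a b, m.f a = some b ↔ g b = a)

/-- `m` is a projection. -/
def IsProjection (m : RealMap r r₀) : Prop := ∃ g, m.IsProjectionVia g

end RealMap

/-- A realisation is extremal when every total map of realisations from it
is an isomorphism. -/
def Realisation.Extremal {A : Type u} {C : ConfigFamily A} (r : Realisation C) : Prop :=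
  ∀ (r' : Realisation C) (m : RealMap r r'), m.IsTotal → m.IsIso

/-- A prime extremal realisation: extremal with a top element. -/
def Realisation.PrimeExtremal {A : Type u} {C : ConfigFamily A} (r : Realisation C) : Prop :=
  r.Extremal ∧ r.HasTop

/-- Isomorphism of realisations. -/
def RealIso {A : Type u} {C : ConfigFamily A} (r r' : Realisation C) : Prop :=
  ∃ m : RealMap r r', m.IsIso

/-- `m` is the composite of `m₁` followed by `m₂` (as partial functions). -/
def CompEq {A : Type u} {C : ConfigFamily A} {r r' r'' : Realisation C}
    (m₁ : RealMap r r') (m₂ : RealMap r' r'') (m : RealMap r r'') : Prop :=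
  ∀ a c, m.f a = some c ↔ ∃ b, m₁.f a = some b ∧ m₂.f b = some c

/-! ### Auxiliary development for the uniqueness theorem -/

section UniquenessAux

variable {A : Type u} {C : ConfigFamily A}

theorem pimage_some_id {α : Type v} (x : Set α) :
    pimage (fun a => (some a : Option α)) x = x := by
  ext b
  constructor
  · rintro ⟨a, ha, hab⟩
    obtain rfl := Option.some_inj.mp hab
    exact ha
  · intro hb
    exact ⟨b, hb, rfl⟩

theorem pimage_some_comp {α : Type v} {β : Type w} (k : α → β) (x : Set α) :
    pimage (fun p => (some (k p) : Option β)) x = k '' x := by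
  ext z
  constructor
  · rintro ⟨p, hp, hz⟩
    exact ⟨p, hp, Option.some_inj.mp hz⟩
  · rintro ⟨p, hp, rfl⟩
    exact ⟨p, hp, rfl⟩

theorem pimage_finite {α : Type v} {β : Type w} (f : α → Option β) {x : Set α}
    (h : x.Finite) : (pimage f x).Finite := by
  have hsub : pimage f x ⊆ (fun b : β => (some b : Option β)) ⁻¹' ((fun a => f a) '' x) := by
    rintro b ⟨a, ha, hab⟩
    exact ⟨a, ha, hab⟩
  exact Set.Finite.subset
    (Set.Finite.preimage (Option.some_injective β).injOn (h.image _)) hsub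

theorem lowerDown (r : Realisation C) (c : r.carrier) : r.IsDown {x | r.le x c} :=
  fun p hp q hq => r.le_trans q p c hq hp

theorem downUnion (r : Realisation C) {s t : Set r.carrier}
    (hs : r.IsDown s) (ht : r.IsDown t) : r.IsDown (s ∪ t) := by
  rintro p (hp | hp) q hq
  · exact Or.inl (hs p hp q hq)
  · exact Or.inr (ht p hp q hq)

theorem downInter (r : Realisation C) {s t : Set r.carrier}
    (hs : r.IsDown s) (ht : r.IsDown t) : r.IsDown (s ∩ t) :=
  fun p hp q hq => ⟨hs p hp.1 q hq, ht p hp.2 q hq⟩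

theorem downIUnion (r : Realisation C) {ι : Sort v} (s : ι → Set r.carrier)
    (h : ∀ i, r.IsDown (s i)) : r.IsDown (⋃ i, s i) := by
  intro p hp q hq
  rcases Set.mem_iUnion.mp hp with ⟨i, hi⟩
  exact Set.mem_iUnion.mpr ⟨i, h i p hi q hq⟩

/-- The union trick: a set whose "principal lower sets" all realise
configurations, and are all bounded by images of down-closed sets of a fixed
realisation, has its image in the family. -/
theorem union_trick (r₀ : Realisation C) {β : Type v} (ρβ : β → A)
    (x : Set β) (L : β → Set β)
    (hmem : ∀ y ∈ x, y ∈ L y)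
    (hLsub : ∀ y ∈ x, L y ⊆ x)
    (hF : ∀ y ∈ x, ρβ '' L y ∈ C.F)
    (hbd : ∀ y ∈ x, ∃ S, r₀.IsDown S ∧ ρβ '' L y ⊆ r₀.ρ '' S) :
    ρβ '' x ∈ C.F := by
  classical
  set X : Set (Set A) := (fun y => ρβ '' L y) '' x with hX
  have hXsub : X ⊆ C.F := by
    rintro w ⟨y, hy, rfl⟩
    exact hF y hy
  set S : Set r₀.carrier := ⋃ y, ⋃ (h : y ∈ x), (hbd y h).choose with hS
  have hSdown : r₀.IsDown S :=
    downIUnion r₀ _ (fun y => downIUnion r₀ _ (fun h => (hbd y h).choose_spec.1))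
  have hzF : r₀.ρ '' S ∈ C.F := r₀.real S hSdown
  have hall : ∀ w ∈ X, w ⊆ r₀.ρ '' S := by
    rintro w ⟨y, hy, rfl⟩
    refine Set.Subset.trans (hbd y hy).choose_spec.2 (Set.image_mono ?_)
    intro p hp
    exact Set.mem_iUnion.mpr ⟨y, Set.mem_iUnion.mpr ⟨hy, hp⟩⟩
  have hmain := C.unionClosed X hXsub
    (fun Y hY _ => ⟨r₀.ρ '' S, hzF, fun w hw => hall w (hY hw)⟩)
  have heq : ⋃₀ X = ρβ '' x := by
    apply Set.Subset.antisymm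
    · rintro e ⟨w, ⟨y, hy, rfl⟩, he⟩
      rcases he with ⟨p, hp, rfl⟩
      exact ⟨p, hLsub y hy hp, rfl⟩
    · rintro e ⟨p, hp, rfl⟩
      exact ⟨ρβ '' L p, ⟨p, hp, rfl⟩, ⟨p, hmem p hp, rfl⟩⟩
  rwa [heq] at hmain

/-- The thinning engine: a sub-preorder of an extremal realisation whose
down-closed sets all realise configurations must coincide with the order. -/
theorem thin_ext (r : Realisation C) (hr : r.Extremal)
    (le2 : r.carrier → r.carrier → Prop)
    (refl2 : ∀ a, le2 a a)
    (trans2 : ∀ a b c, le2 a b → le2 b c → le2 a c)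
    (sub2 : ∀ a b, le2 a b → r.le a b)
    (real2 : ∀ x : Set r.carrier, (∀ a ∈ x, ∀ b, le2 b a → b ∈ x) → r.ρ '' x ∈ C.F) :
    ∀ a c, r.le a c → le2 a c := by
  let r₂ : Realisation C :=
    { carrier := r.carrier, le := le2, le_refl := refl2, le_trans := trans2,
      le_antisymm := fun a b h1 h2 => r.le_antisymm a b (sub2 _ _ h1) (sub2 _ _ h2),
      finPast := fun e => (r.finPast e).subset (fun p hp => sub2 _ _ hp),
      ρ := r.ρ, real := real2 }
  let m : RealMap r r₂ :=
    { f := fun a => some a,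
      surj := fun b => ⟨b, rfl⟩,
      presDown := by
        intro x hx
        rw [pimage_some_id]
        intro p hp q hq
        exact hx p hp q (sub2 q p hq),
      commutes := by
        intro a b h
        obtain rfl := Option.some_inj.mp h
        rfl }
  obtain ⟨m', hiff⟩ := hr r₂ m (fun p => ⟨p, rfl⟩)
  have hm' : ∀ y, m'.f y = some y := fun y => (hiff y y).mp rfl
  intro a c hac
  have hd2 : r₂.IsDown {x | le2 x c} := fun p hp q hq => trans2 q p c hq hp
  have hdr := m'.presDown _ hd2
  have hpim : pimage m'.f {x | le2 x c} = {x | le2 x c} := by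
    ext q
    constructor
    · rintro ⟨p, hp, hpq⟩
      rw [hm' p] at hpq
      obtain rfl := Option.some_inj.mp hpq
      exact hp
    · intro hq
      exact ⟨q, hq, hm' q⟩
  rw [hpim] at hdr
  exact hdr c (refl2 c) a hac

/-- The injectivity engine: if a total map out of an extremal realisation is
given by a function, that function is injective. -/
theorem inj_ext (r : Realisation C) (hr : r.Extremal) (r₂ : Realisation C)
    (m : RealMap r r₂) (k : r.carrier → r₂.carrier) (hk : ∀ a, m.f a = some (k a)) :
    Function.Injective k := by
  obtain ⟨m', hiff⟩ := hr r₂ m (fun a => ⟨k a, hk a⟩)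
  intro a₁ a₂ h
  have h1 : m'.f (k a₁) = some a₁ := (hiff a₁ (k a₁)).mp (hk a₁)
  have h2 : m'.f (k a₂) = some a₂ := (hiff a₂ (k a₂)).mp (hk a₂)
  rw [h] at h1
  rw [h1] at h2
  exact Option.some_inj.mp h2

/-- The domain of a map out of an extremal realisation is down-closed. -/
theorem dom_down {r r' : Realisation C} (hr : r.Extremal) (f : RealMap r r')
    {a c : r.carrier} (hac : r.le a c) (hc : ∃ b, f.f c = some b) :
    ∃ b, f.f a = some b := by
  have key := thin_ext r hr
      (fun p q => r.le p q ∧ ((∃ b, f.f q = some b) → ∃ b, f.f p = some b))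
      (fun p => ⟨r.le_refl p, id⟩)
      (fun p q s h1 h2 => ⟨r.le_trans p q s h1.1 h2.1, fun hd => h1.2 (h2.2 hd)⟩)
      (fun p q h => h.1)
      ?_
  · exact (key a c hac).2 hc
  · intro x hx
    refine union_trick r r.ρ x
      (fun y => {p | r.le p y ∧ ((∃ b, f.f y = some b) → ∃ b, f.f p = some b)})
      (fun y _ => ⟨r.le_refl y, id⟩)
      (fun y hy p hp => hx y hy p hp) ?_ ?_
    · intro y hy
      show r.ρ '' {p | r.le p y ∧ ((∃ b, f.f y = some b) → ∃ b, f.f p = some b)} ∈ C.F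
      by_cases hdy : ∃ b, f.f y = some b
      · have heq : r.ρ '' {p | r.le p y ∧ ((∃ b, f.f y = some b) → ∃ b, f.f p = some b)}
            = r'.ρ '' pimage f.f {p | r.le p y} := by
          ext e
          constructor
          · rintro ⟨p, ⟨hpy, himp⟩, rfl⟩
            obtain ⟨bp, hbp⟩ := himp hdy
            exact ⟨bp, ⟨p, hpy, hbp⟩, (f.commutes p bp hbp).symm⟩
          · rintro ⟨bp, ⟨p, hpy, hbp⟩, rfl⟩
            exact ⟨p, ⟨hpy, fun _ => ⟨bp, hbp⟩⟩, f.commutes p bp hbp⟩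
        rw [heq]
        exact r'.real _ (f.presDown _ (lowerDown r y))
      · have heq : {p | r.le p y ∧ ((∃ b, f.f y = some b) → ∃ b, f.f p = some b)}
            = {p | r.le p y} := by
          ext p
          exact ⟨fun h => h.1, fun h => ⟨h, fun hd => absurd hd hdy⟩⟩
        rw [heq]
        exact r.real _ (lowerDown r y)
    · intro y hy
      exact ⟨{p | r.le p y}, lowerDown r y, Set.image_mono (fun p hp => hp.1)⟩

/-- Maps out of an extremal realisation are monotone on their domain. -/
theorem map_mono {r r' : Realisation C} (hr : r.Extremal) (f : RealMap r r')
    {a c : r.carrier} {b b' : r'.carrier} (hac : r.le a c)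
    (ha : f.f a = some b) (hc : f.f c = some b') : r'.le b b' := by
  have key := thin_ext r hr
      (fun p q => r.le p q ∧ ∀ bp bq, f.f p = some bp → f.f q = some bq → r'.le bp bq)
      (fun p => ⟨r.le_refl p, fun bp bq h1 h2 => by
        rw [h1] at h2
        obtain rfl := Option.some_inj.mp h2
        exact r'.le_refl bp⟩)
      (fun p q s h1 h2 => ⟨r.le_trans p q s h1.1 h2.1, fun bp bs hp hs => by
        obtain ⟨bq, hq⟩ := dom_down hr f h2.1 ⟨bs, hs⟩
        exact r'.le_trans bp bq bs (h1.2 bp bq hp hq) (h2.2 bq bs hq hs)⟩)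
      (fun p q h => h.1)
      ?_
  · exact (key a c hac).2 b b' ha hc
  · intro x hx
    refine union_trick r r.ρ x
      (fun y => {p | r.le p y ∧ ∀ bp bq, f.f p = some bp → f.f y = some bq → r'.le bp bq})
      (fun y _ => ⟨r.le_refl y, fun bp bq h1 h2 => by
        rw [h1] at h2
        obtain rfl := Option.some_inj.mp h2
        exact r'.le_refl bp⟩)
      (fun y hy p hp => hx y hy p hp) ?_ ?_
    · intro y hy
      by_cases hyn : f.f y = none
      · have hyy := hyn
        show r.ρ ''
          {p | r.le p y ∧ ∀ bp bq, f.f p = some bp → f.f y = some bq → r'.le bp bq} ∈ C.F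
        have heq : {p | r.le p y ∧ ∀ bp bq, f.f p = some bp → f.f y = some bq → r'.le bp bq}
            = {p | r.le p y} := by
          ext p
          refine ⟨fun h => h.1, fun h => ⟨h, fun bp bq h1 h2 => ?_⟩⟩
          rw [hyy] at h2
          exact nomatch h2
        rw [heq]
        exact r.real _ (lowerDown r y)
      · obtain ⟨b₀, hyy⟩ := Option.ne_none_iff_exists'.mp hyn
        show r.ρ ''
          {p | r.le p y ∧ ∀ bp bq, f.f p = some bp → f.f y = some bq → r'.le bp bq} ∈ C.F
        have heq : r.ρ '' {p | r.le p y ∧ ∀ bp bq, f.f p = some bp → f.f y = some bq → r'.le bp bq}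
            = r'.ρ '' (pimage f.f {p | r.le p y} ∩ {q | r'.le q b₀}) := by
          ext e
          constructor
          · rintro ⟨p, ⟨hpy, hcond⟩, rfl⟩
            obtain ⟨bp, hbp⟩ := dom_down hr f hpy ⟨b₀, hyy⟩
            exact ⟨bp, ⟨⟨p, hpy, hbp⟩, hcond bp b₀ hbp hyy⟩, (f.commutes p bp hbp).symm⟩
          · rintro ⟨bp, ⟨⟨p, hpy, hbp⟩, hbpb⟩, rfl⟩
            refine ⟨p, ⟨hpy, fun b₁ b₂ h₁ h₂ => ?_⟩, f.commutes p bp hbp⟩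
            rw [h₁] at hbp
            obtain rfl := Option.some_inj.mp hbp
            rw [hyy] at h₂
            obtain rfl := Option.some_inj.mp h₂
            exact hbpb
        rw [heq]
        exact r'.real _ (downInter r' (f.presDown _ (lowerDown r y)) (lowerDown r' b₀))
    · intro y hy
      exact ⟨{p | r.le p y}, lowerDown r y, Set.image_mono (fun p hp => hp.1)⟩

/-! #### The sum construction, for injectivity -/

def MC {r r' : Realisation C} (f : RealMap r r') : Type u :=
  r'.carrier ⊕ {a : r.carrier // f.f a = none}

def Mle {r r' : Realisation C} (f : RealMap r r') : MC f → MC f → Prop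
  | Sum.inl b₁, Sum.inl b₂ => r'.le b₁ b₂
  | Sum.inl b₁, Sum.inr a => ∃ p, r.le p a.1 ∧ f.f p = some b₁
  | Sum.inr _, Sum.inl _ => False
  | Sum.inr a₁, Sum.inr a₂ => r.le a₁.1 a₂.1

theorem Mle_refl {r r' : Realisation C} (f : RealMap r r') :
    ∀ z, Mle f z z := by
  rintro (b | a)
  · exact r'.le_refl b
  · exact r.le_refl a.1

theorem Mle_trans {r r' : Realisation C} (f : RealMap r r') :
    ∀ x y z, Mle f x y → Mle f y z → Mle f x z := by
  rintro (b₁ | a₁) (b₂ | a₂) (b₃ | a₃) h1 h2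
  · exact r'.le_trans _ _ _ h1 h2
  · obtain ⟨p, hpa, hfp⟩ := h2
    have hD := f.presDown {q | r.le q p} (lowerDown r p)
    obtain ⟨p', hp', hfp'⟩ := hD b₂ ⟨p, r.le_refl p, hfp⟩ b₁ h1
    exact ⟨p', r.le_trans _ _ _ hp' hpa, hfp'⟩
  · exact h2.elim
  · obtain ⟨p, hpa, hfp⟩ := h1
    exact ⟨p, r.le_trans _ _ _ hpa h2, hfp⟩
  · exact h1.elim
  · exact h1.elim
  · exact h2.elim
  · exact r.le_trans _ _ _ h1 h2

theorem Mle_antisymm {r r' : Realisation C} (f : RealMap r r') :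
    ∀ x y, Mle f x y → Mle f y x → x = y := by
  rintro (b₁ | a₁) (b₂ | a₂) h1 h2
  · exact congrArg Sum.inl (r'.le_antisymm _ _ h1 h2)
  · exact h2.elim
  · exact h1.elim
  · exact congrArg Sum.inr (Subtype.ext (r.le_antisymm _ _ h1 h2))

def Mreal {r r' : Realisation C} (f : RealMap r r') : Realisation C where
  carrier := MC f
  le := Mle f
  le_refl := Mle_refl f
  le_trans := Mle_trans f
  le_antisymm := Mle_antisymm f
  finPast := by
    rintro (b | a)
    · have hsub : {z | Mle f z (Sum.inl b)} ⊆ Sum.inl '' {q | r'.le q b} := by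
        rintro (q | a') hz
        · exact ⟨q, hz, rfl⟩
        · exact hz.elim
      exact Set.Finite.subset ((r'.finPast b).image _) hsub
    · have hsub : {z | Mle f z (Sum.inr a)} ⊆
          (Sum.inl '' pimage f.f {p | r.le p a.1}) ∪
            (Sum.inr '' (Subtype.val ⁻¹' {p | r.le p a.1})) := by
        rintro (q | a') hz
        · exact Or.inl ⟨q, hz, rfl⟩
        · exact Or.inr ⟨a', hz, rfl⟩
      refine Set.Finite.subset (Set.Finite.union ?_ ?_) hsub
      · exact (pimage_finite f.f (r.finPast a.1)).image _
      · exact (Set.Finite.preimage Subtype.val_injective.injOn (r.finPast a.1)).image _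
  ρ := Sum.elim r'.ρ (fun a => r.ρ a.1)
  real := by
    intro x hx
    refine union_trick r (Sum.elim r'.ρ (fun a => r.ρ a.1)) x (fun y => {z | Mle f z y})
      (fun y _ => Mle_refl f y) (fun y hy z hz => hx y hy z hz) ?_ ?_
    · rintro (b | a) hy
      · show Sum.elim r'.ρ (fun a => r.ρ a.1) '' {z | Mle f z (Sum.inl b)} ∈ C.F
        have heq : Sum.elim r'.ρ (fun a => r.ρ a.1) '' {z | Mle f z (Sum.inl b)}
            = r'.ρ '' {q | r'.le q b} := by
          ext e
          constructor
          · rintro ⟨z, hz, rfl⟩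
            cases z with
            | inl q => exact ⟨q, hz, rfl⟩
            | inr a' => exact hz.elim
          · rintro ⟨q, hq, rfl⟩
            exact ⟨Sum.inl q, hq, rfl⟩
        rw [heq]
        exact r'.real _ (lowerDown r' b)
      · show Sum.elim r'.ρ (fun a => r.ρ a.1) '' {z | Mle f z (Sum.inr a)} ∈ C.F
        have heq : Sum.elim r'.ρ (fun a => r.ρ a.1) '' {z | Mle f z (Sum.inr a)}
            = r.ρ '' {p | r.le p a.1} := by
          ext e
          constructor
          · rintro ⟨z, hz, rfl⟩
            cases z with
            | inl q =>
              obtain ⟨p, hpa, hfp⟩ := hz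
              exact ⟨p, hpa, (f.commutes p q hfp)⟩
            | inr a' => exact ⟨a'.1, hz, rfl⟩
          · rintro ⟨p, hp, rfl⟩
            cases hfp : f.f p with
            | some bp => exact ⟨Sum.inl bp, ⟨p, hp, hfp⟩, (f.commutes p bp hfp).symm⟩
            | none => exact ⟨Sum.inr ⟨p, hfp⟩, hp, rfl⟩
        rw [heq]
        exact r.real _ (lowerDown r a.1)
    · rintro (b | a) hy
      · obtain ⟨p₀, hp₀⟩ := f.surj b
        refine ⟨{p | r.le p p₀}, lowerDown r p₀, ?_⟩
        rintro e ⟨z, hz, rfl⟩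
        cases z with
        | inl q =>
          obtain ⟨p, hp, hfp⟩ :=
            f.presDown {p | r.le p p₀} (lowerDown r p₀) b ⟨p₀, r.le_refl p₀, hp₀⟩ q hz
          exact ⟨p, hp, f.commutes p q hfp⟩
        | inr a' => exact hz.elim
      · refine ⟨{p | r.le p a.1}, lowerDown r a.1, ?_⟩
        rintro e ⟨z, hz, rfl⟩
        cases z with
        | inl q =>
          obtain ⟨p, hpa, hfp⟩ := hz
          exact ⟨p, hpa, f.commutes p q hfp⟩
        | inr a' => exact ⟨a'.1, hz, rfl⟩

open Classical in
noncomputable def Mk {r r' : Realisation C} (f : RealMap r r') (p : r.carrier) : MC f :=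
  if h : f.f p = none then Sum.inr ⟨p, h⟩
  else Sum.inl ((f.f p).get (Option.ne_none_iff_isSome.mp h))

theorem Mk_some {r r' : Realisation C} {f : RealMap r r'} {p : r.carrier}
    {b : r'.carrier} (h : f.f p = some b) : Mk f p = Sum.inl b := by
  simp [Mk, h]
  rfl

theorem Mk_none {r r' : Realisation C} {f : RealMap r r'} {p : r.carrier}
    (h : f.f p = none) : Mk f p = Sum.inr ⟨p, h⟩ := by
  simp [Mk, h]
  rfl

noncomputable def Mmap {r r' : Realisation C} (f : RealMap r r') : RealMap r (Mreal f) where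
  f := fun p => some (Mk f p)
  surj := by
    rintro (b | a)
    · obtain ⟨p, hp⟩ := f.surj b
      refine ⟨p, ?_⟩
      show some (Mk f p) = some (Sum.inl b)
      rw [Mk_some hp]
      rfl
    · refine ⟨a.1, ?_⟩
      show some (Mk f a.1) = some (Sum.inr a)
      rw [Mk_none a.2]
      rfl
  presDown := by
    intro x hx
    rw [pimage_some_comp (β := (Mreal f).carrier) (Mk f)]
    rintro y ⟨p, hp, rfl⟩ z hz
    cases hfp : f.f p with
    | some b =>
      rw [Mk_some hfp] at hz
      cases z with
      | inl q =>
        have hD := f.presDown {p' | r.le p' p} (lowerDown r p)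
        obtain ⟨p', hp', hfp'⟩ := hD b ⟨p, r.le_refl p, hfp⟩ q hz
        exact ⟨p', hx p hp p' hp', Mk_some hfp'⟩
      | inr a => exact hz.elim
    | none =>
      rw [Mk_none hfp] at hz
      cases z with
      | inl q =>
        obtain ⟨p', hp', hfp'⟩ := hz
        exact ⟨p', hx p hp p' hp', Mk_some hfp'⟩
      | inr a' =>
        exact ⟨a'.1, hx p hp a'.1 hz, Mk_none a'.2⟩
  commutes := by
    intro p y h
    obtain rfl := Option.some_inj.mp h
    cases hfp : f.f p with
    | some b =>
      rw [Mk_some hfp]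
      exact f.commutes p b hfp
    | none =>
      rw [Mk_none hfp]
      rfl

/-- Maps out of an extremal realisation are injective on their domain. -/
theorem map_inj {r r' : Realisation C} (hr : r.Extremal) (f : RealMap r r')
    {p₁ p₂ : r.carrier} {b : r'.carrier}
    (h₁ : f.f p₁ = some b) (h₂ : f.f p₂ = some b) : p₁ = p₂ := by
  have hinj := inj_ext r hr (Mreal f) (Mmap f) (Mk f) (fun a => rfl)
  apply hinj
  rw [Mk_some h₁, Mk_some h₂]

noncomputable def ginv {r r' : Realisation C} (f : RealMap r r') (b : r'.carrier) :
    r.carrier := (f.surj b).choose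

theorem ginv_spec {r r' : Realisation C} (f : RealMap r r') (b : r'.carrier) :
    f.f (ginv f b) = some b := (f.surj b).choose_spec

theorem ginv_unique {r r' : Realisation C} (hr : r.Extremal) (f : RealMap r r')
    {p : r.carrier} {b : r'.carrier} (h : f.f p = some b) : p = ginv f b :=
  map_inj hr f h (ginv_spec f b)

/-- The inverse of a map between extremal realisations is monotone. -/
theorem ginv_mono {r r' : Realisation C} (hr : r.Extremal) (hr' : r'.Extremal)
    (f : RealMap r r') {b₁ b₂ : r'.carrier} (h : r'.le b₁ b₂) :
    r.le (ginv f b₁) (ginv f b₂) := by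
  have key := thin_ext r' hr'
      (fun q₁ q₂ => r'.le q₁ q₂ ∧ r.le (ginv f q₁) (ginv f q₂))
      (fun q => ⟨r'.le_refl q, r.le_refl _⟩)
      (fun q₁ q₂ q₃ h1 h2 => ⟨r'.le_trans _ _ _ h1.1 h2.1, r.le_trans _ _ _ h1.2 h2.2⟩)
      (fun q₁ q₂ h12 => h12.1)
      ?_
  · exact (key b₁ b₂ h).2
  · intro x hx
    refine union_trick r' r'.ρ x
      (fun y => {q | r'.le q y ∧ r.le (ginv f q) (ginv f y)})
      (fun y _ => ⟨r'.le_refl y, r.le_refl _⟩)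
      (fun y hy q hq => hx y hy q hq) ?_ ?_
    · intro y hy
      show r'.ρ '' {q | r'.le q y ∧ r.le (ginv f q) (ginv f y)} ∈ C.F
      have heq : r'.ρ '' {q | r'.le q y ∧ r.le (ginv f q) (ginv f y)}
          = r.ρ '' ({p | ∃ q, f.f p = some q ∧ r'.le q y} ∩ {p | r.le p (ginv f y)}) := by
        ext e
        constructor
        · rintro ⟨q, ⟨hq1, hq2⟩, rfl⟩
          exact ⟨ginv f q, ⟨⟨q, ginv_spec f q, hq1⟩, hq2⟩, f.commutes _ q (ginv_spec f q)⟩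
        · rintro ⟨p, ⟨⟨q, hfp, hq1⟩, hp2⟩, rfl⟩
          have hpg : p = ginv f q := ginv_unique hr f hfp
          exact ⟨q, ⟨hq1, hpg ▸ hp2⟩, (f.commutes p q hfp).symm⟩
      rw [heq]
      refine r.real _ (downInter r ?_ (lowerDown r (ginv f y)))
      intro p hp p' hp'
      obtain ⟨q, hfp, hqy⟩ := hp
      obtain ⟨q', hfq'⟩ := dom_down hr f hp' ⟨q, hfp⟩
      exact ⟨q', hfq', r'.le_trans _ _ _ (map_mono hr f hp' hfq' hfp) hqy⟩
    · intro y hy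
      exact ⟨{q | r'.le q y}, lowerDown r' y, Set.image_mono (fun q hq => hq.1)⟩

/-! #### The merge construction -/

def Tr (r : Realisation C) (a c : r.carrier) (hca : c ≠ a)
    (hlab : r.ρ a = r.ρ c) (hac : ¬ r.le a c) : Realisation C where
  carrier := {x : r.carrier // x ≠ a}
  le x y := r.le x.1 y.1 ∨ (r.le x.1 c ∧ r.le a y.1)
  le_refl x := Or.inl (r.le_refl x.1)
  le_trans := by
    rintro x y z (h1 | ⟨h1, h1'⟩) (h2 | ⟨h2, h2'⟩)
    · exact Or.inl (r.le_trans _ _ _ h1 h2)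
    · exact Or.inr ⟨r.le_trans _ _ _ h1 h2, h2'⟩
    · exact Or.inr ⟨h1, r.le_trans _ _ _ h1' h2⟩
    · exact absurd (r.le_trans _ _ _ h1' h2) hac
  le_antisymm := by
    rintro x y (h1 | ⟨h1, h1'⟩) (h2 | ⟨h2, h2'⟩)
    · exact Subtype.ext (r.le_antisymm _ _ h1 h2)
    · exact absurd (r.le_trans _ _ _ (r.le_trans _ _ _ h2' h1) h2) hac
    · exact absurd (r.le_trans _ _ _ (r.le_trans _ _ _ h1' h2) h1) hac
    · exact absurd (r.le_trans _ _ _ h2' h1) hac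
  finPast := by
    intro e
    have hsub : {z : {x : r.carrier // x ≠ a} | r.le z.1 e.1 ∨ (r.le z.1 c ∧ r.le a e.1)}
        ⊆ Subtype.val ⁻¹' ({p | r.le p e.1} ∪ {p | r.le p c}) := by
      rintro z (hz | hz)
      · exact Or.inl hz
      · exact Or.inr hz.1
    exact Set.Finite.subset
      (Set.Finite.preimage Subtype.val_injective.injOn
        ((r.finPast e.1).union (r.finPast c))) hsub
  ρ x := r.ρ x.1
  real := by
    intro x hx
    refine union_trick r (fun z : {x : r.carrier // x ≠ a} => r.ρ z.1) x
      (fun y => {z | r.le z.1 y.1 ∨ (r.le z.1 c ∧ r.le a y.1)})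
      (fun y _ => Or.inl (r.le_refl y.1))
      (fun y hy z hz => hx y hy z hz) ?_ ?_
    · intro y hy
      show (fun z : {x : r.carrier // x ≠ a} => r.ρ z.1) ''
        {z | r.le z.1 y.1 ∨ (r.le z.1 c ∧ r.le a y.1)} ∈ C.F
      by_cases hay : r.le a y.1
      · have heq : (fun z : {x : r.carrier // x ≠ a} => r.ρ z.1) ''
            {z | r.le z.1 y.1 ∨ (r.le z.1 c ∧ r.le a y.1)}
            = r.ρ '' ({p | r.le p y.1} ∪ {p | r.le p c}) := by
          ext e
          constructor
          · rintro ⟨z, (hz | hz), rfl⟩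
            · exact ⟨z.1, Or.inl hz, rfl⟩
            · exact ⟨z.1, Or.inr hz.1, rfl⟩
          · rintro ⟨p, hp, rfl⟩
            by_cases hpa : p = a
            · refine ⟨⟨c, hca⟩, Or.inr ⟨r.le_refl c, hay⟩, ?_⟩
              rw [hpa]
              exact hlab.symm
            · rcases hp with hp | hp
              · exact ⟨⟨p, hpa⟩, Or.inl hp, rfl⟩
              · exact ⟨⟨p, hpa⟩, Or.inr ⟨hp, hay⟩, rfl⟩
        rw [heq]
        exact r.real _ (downUnion r (lowerDown r y.1) (lowerDown r c))
      · have heq : (fun z : {x : r.carrier // x ≠ a} => r.ρ z.1) ''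
            {z | r.le z.1 y.1 ∨ (r.le z.1 c ∧ r.le a y.1)}
            = r.ρ '' {p | r.le p y.1} := by
          ext e
          constructor
          · rintro ⟨z, (hz | hz), rfl⟩
            · exact ⟨z.1, hz, rfl⟩
            · exact absurd hz.2 hay
          · rintro ⟨p, hp, rfl⟩
            have hpa : p ≠ a := by
              intro h
              rw [h] at hp
              exact hay hp
            exact ⟨⟨p, hpa⟩, Or.inl hp, rfl⟩
        rw [heq]
        exact r.real _ (lowerDown r y.1)
    · intro y hy
      refine ⟨{p | r.le p y.1} ∪ {p | r.le p c},
        downUnion r (lowerDown r y.1) (lowerDown r c), ?_⟩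
      rintro e ⟨z, (hz | hz), rfl⟩
      · exact ⟨z.1, Or.inl hz, rfl⟩
      · exact ⟨z.1, Or.inr hz.1, rfl⟩

open Classical in
noncomputable def Tk (r : Realisation C) (a c : r.carrier) (hca : c ≠ a) (p : r.carrier) :
    {x : r.carrier // x ≠ a} :=
  if h : p = a then ⟨c, hca⟩ else ⟨p, h⟩

theorem Tk_pos {r : Realisation C} {a c : r.carrier} {hca : c ≠ a} :
    Tk r a c hca a = ⟨c, hca⟩ := by
  simp [Tk]

theorem Tk_neg {r : Realisation C} {a c : r.carrier} {hca : c ≠ a} {p : r.carrier}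
    (h : p ≠ a) : Tk r a c hca p = ⟨p, h⟩ := by
  simp [Tk, h]

noncomputable def Tmap (r : Realisation C) (a c : r.carrier) (hca : c ≠ a)
    (hlab : r.ρ a = r.ρ c) (hac : ¬ r.le a c)
    (hpast : ∀ x, r.le x c → x ≠ c → (r.le x a ∧ x ≠ a)) :
    RealMap r (Tr r a c hca hlab hac) where
  f p := some (Tk r a c hca p)
  surj y := ⟨y.1, by
    show some (Tk r a c hca y.1) = some y
    rw [Tk_neg y.2]
    rfl⟩
  presDown := by
    intro D hD
    rw [pimage_some_comp (β := (Tr r a c hca hlab hac).carrier) (Tk r a c hca)]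
    rintro y ⟨w, hw, rfl⟩ z hz
    have hz' : (Tr r a c hca hlab hac).le z (Tk r a c hca w) := hz
    by_cases hwa : w = a
    · have hk : Tk r a c hca w = ⟨c, hca⟩ := by rw [hwa]; exact Tk_pos
      rw [hk] at hz'
      have haD : a ∈ D := hwa ▸ hw
      have hzc : r.le z.1 c := by
        rcases hz' with h | h
        · exact h
        · exact h.1
      by_cases hz1 : z.1 = c
      · refine ⟨a, haD, ?_⟩
        show Tk r a c hca a = z
        rw [Tk_pos]
        exact Subtype.ext hz1.symm
      · obtain ⟨hza, _⟩ := hpast z.1 hzc hz1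
        refine ⟨z.1, hD a haD z.1 hza, ?_⟩
        show Tk r a c hca z.1 = z
        rw [Tk_neg z.2]
        rfl
    · have hk : Tk r a c hca w = ⟨w, hwa⟩ := Tk_neg hwa
      rw [hk] at hz'
      rcases hz' with hz2 | ⟨hz1, hz2⟩
      · refine ⟨z.1, hD w hw z.1 hz2, ?_⟩
        show Tk r a c hca z.1 = z
        rw [Tk_neg z.2]
        rfl
      · have haD : a ∈ D := hD w hw a hz2
        by_cases hz3 : z.1 = c
        · refine ⟨a, haD, ?_⟩
          show Tk r a c hca a = z
          rw [Tk_pos]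
          exact Subtype.ext hz3.symm
        · obtain ⟨hza, _⟩ := hpast z.1 hz1 hz3
          refine ⟨z.1, hD a haD z.1 hza, ?_⟩
          show Tk r a c hca z.1 = z
          rw [Tk_neg z.2]
          rfl
  commutes := by
    intro p y h
    obtain rfl := Option.some_inj.mp h
    show r.ρ p = r.ρ (Tk r a c hca p).1
    by_cases hp : p = a
    · have hk : Tk r a c hca p = ⟨c, hca⟩ := by rw [hp]; exact Tk_pos
      rw [hk, hp]
      exact hlab
    · rw [Tk_neg hp]

/-- The merge contradiction: in an extremal realisation, there cannot be two
distinct elements with the same label with the strict past of one contained in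
the strict past of the other (and incomparable as captured by `hpast`). -/
theorem merge_contra {r : Realisation C} (hr : r.Extremal) {a c : r.carrier}
    (hne : a ≠ c) (hlab : r.ρ a = r.ρ c)
    (hpast : ∀ x, r.le x c → x ≠ c → (r.le x a ∧ x ≠ a)) : False := by
  have hca : c ≠ a := hne.symm
  have hac : ¬ r.le a c := fun h => (hpast a h hne).2 rfl
  have hinj := inj_ext r hr (Tr r a c hca hlab hac) (Tmap r a c hca hlab hac hpast)
    (Tk r a c hca) (fun p => rfl)
  apply hne
  apply hinj
  rw [Tk_pos, Tk_neg hca]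

/-! #### The main induction step -/

theorem step {r r' : Realisation C} (hr : r.Extremal) (hr' : r'.Extremal)
    (f f' : RealMap r r') (b : r'.carrier)
    (IH : ∀ b₁, r'.le b₁ b → b₁ ≠ b → ginv f b₁ = ginv f' b₁) :
    ∀ x, r.le x (ginv f b) → x ≠ ginv f b → (r.le x (ginv f' b) ∧ x ≠ ginv f' b) := by
  intro x hxc hxc'
  have hcdom : f.f (ginv f b) = some b := ginv_spec f b
  obtain ⟨b₁, hb₁⟩ := dom_down hr f hxc ⟨b, hcdom⟩
  have hb₁b : r'.le b₁ b := map_mono hr f hxc hb₁ hcdom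
  have hb₁ne : b₁ ≠ b := by
    intro h
    subst h
    exact hxc' (map_inj hr f hb₁ hcdom)
  have hx_eq : x = ginv f b₁ := ginv_unique hr f hb₁
  have hx_eq' : x = ginv f' b₁ := by rw [hx_eq, IH b₁ hb₁b hb₁ne]
  constructor
  · rw [hx_eq']
    exact ginv_mono hr hr' f' hb₁b
  · intro h
    apply hb₁ne
    have h1 : f'.f x = some b₁ := by rw [hx_eq']; exact ginv_spec f' b₁
    rw [h] at h1
    rw [ginv_spec f' b] at h1
    exact (Option.some_inj.mp h1).symm

theorem ginv_eq {r r' : Realisation C} (hr : r.Extremal) (hr' : r'.Extremal)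
    (f f' : RealMap r r') : ∀ b, ginv f b = ginv f' b := by
  have main : ∀ n (b : r'.carrier), (r'.finPast b).toFinset.card ≤ n →
      ginv f b = ginv f' b := by
    intro n
    induction n with
    | zero =>
      intro b hb
      exfalso
      have hbmem : b ∈ (r'.finPast b).toFinset :=
        (Set.Finite.mem_toFinset _).mpr (r'.le_refl b)
      have := Finset.card_pos.mpr ⟨b, hbmem⟩
      omega
    | succ n IHn =>
      intro b hb
      by_contra hne
      have IHb : ∀ b₁, r'.le b₁ b → b₁ ≠ b → ginv f b₁ = ginv f' b₁ := by
        intro b₁ hle hb1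
        have hss : {e | r'.le e b₁} ⊂ {e | r'.le e b} := by
          constructor
          · intro q hq
            exact r'.le_trans q b₁ b hq hle
          · intro hcon
            exact hb1 (r'.le_antisymm b₁ b hle (hcon (r'.le_refl b)))
        have hcard : (r'.finPast b₁).toFinset.card < (r'.finPast b).toFinset.card := by
          apply Finset.card_lt_card
          rw [Set.Finite.toFinset_ssubset_toFinset]
          exact hss
        exact IHn b₁ (by omega)
      have hstep := step hr hr' f f' b IHb
      have hlab : r.ρ (ginv f' b) = r.ρ (ginv f b) := by
        have h1 := f.commutes _ b (ginv_spec f b)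
        have h2 := f'.commutes _ b (ginv_spec f' b)
        rw [h1, h2]
      have hne' : ginv f' b ≠ ginv f b := fun h => hne h.symm
      exact merge_contra hr hne' hlab hstep
  intro b
  exact main ((r'.finPast b).toFinset.card) b le_rfl

end UniquenessAux

/-- There is at most one map of realisations between extremal realisations. -/
theorem stmt8 {A : Type u} (C : ConfigFamily A) (r r' : Realisation C)
    (hr : r.Extremal) (hr' : r'.Extremal) (f f' : RealMap r r') :
    f.f = f'.f := by
  funext a
  cases hfa : f.f a with
  | some b =>
    have h1 : a = ginv f b := ginv_unique hr f hfa
    have h2 : a = ginv f' b := by rw [h1, ginv_eq hr hr' f f' b]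
    rw [h2]
    exact (ginv_spec f' b).symm
  | none =>
    cases hfa' : f'.f a with
    | none => rfl
    | some b =>
      exfalso
      have h1 : a = ginv f' b := ginv_unique hr f' hfa'
      have h2 : a = ginv f b := by rw [h1, ← ginv_eq hr hr' f f' b]
      have h3 := ginv_spec f b
      rw [← h2, hfa] at h3
      exact nomatch h3
end

section
/- Let (A,≡_A) be an equivalence family and er(A) = (P, ≤_P, Con_P, ≡_P) its causal unfolding. The configurations of er(A), ordered by inclusion, are order-isomorphic to the order of extremal realisations of A: an extremal realisation ρ corresponds, up to isomorphism of realisations, to the configuration {p ∈ P : p ⪯ ρ} of er(A), and conversely a configuration x of er(A) corresponds to the extremal realisation with carrier (x, ⪯) (the restriction of ≤_P to x) and function max : x → A sending each prime extremal to the image of its top element. -/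
universe u v w

/-- Down-closed subsets w.r.t. a causal dependency relation. -/
def DnClosed {P : Type u} (le : P → P → Prop) (x : Set P) : Prop :=
  ∀ a ∈ x, ∀ b, le b a → b ∈ x

/-- Configurations of a (prime) event structure: down-closed subsets all of
whose finite subsets are consistent. -/
def IsCfg {P : Type u} (le : P → P → Prop) (Con : Set (Set P)) (x : Set P) : Prop :=
  DnClosed le x ∧ ∀ X ⊆ x, X.Finite → X ∈ Con

/-- The set `[p) = [p] \ {p}` of strict causal predecessors. -/
def strictPred {P : Type u} (le : P → P → Prop) (p : P) : Set P :=
  {p' | le p' p ∧ p' ≠ p}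

/-- The data of a prime event structure with equivalence (ese). -/
structure ESEData (P : Type u) where
  le : P → P → Prop
  Con : Set (Set P)
  eqv : P → P → Prop

/-- The axioms of a prime event structure with equivalence. -/
structure IsESE {P : Type u} (D : ESEData P) : Prop where
  le_refl : ∀ a, D.le a a
  le_trans : ∀ a b c, D.le a b → D.le b c → D.le a c
  le_antisymm : ∀ a b, D.le a b → D.le b a → a = b
  finCause : ∀ e, {e' | D.le e' e}.Finite
  con_fin : ∀ X ∈ D.Con, X.Finite
  con_single : ∀ e, ({e} : Set P) ∈ D.Con
  con_mono : ∀ X Y, X ⊆ Y → Y ∈ D.Con → X ∈ D.Con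
  con_le : ∀ X ∈ D.Con, ∀ e e', D.le e e' → e' ∈ X → X ∪ {e} ∈ D.Con
  eqv_equiv : Equivalence D.eqv

/-- The configurations of an ese. -/
def Cfgs {P : Type u} (D : ESEData P) : Set (Set P) := {x | IsCfg D.le D.Con x}

/-- A partial function preserves the equivalences: equivalent elements are
either both sent to nothing, or both to defined, equivalent results. -/
def PreservesEqv {α : Type u} {β : Type v} (eA : α → α → Prop) (eB : β → β → Prop)
    (f : α → Option β) : Prop :=
  ∀ a₁ a₂, eA a₁ a₂ → (f a₁ = none ∧ f a₂ = none) ∨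
    ∃ b₁ b₂, f a₁ = some b₁ ∧ f a₂ = some b₂ ∧ eB b₁ b₂

/-- A map of equivalence families (given by their families of configurations
and equivalences): a partial function which preserves the equivalence, sends
configurations to configurations, and locally reflects the equivalence. -/
def IsEFMap {α : Type u} {β : Type v} (FA : Set (Set α)) (eA : α → α → Prop)
    (FB : Set (Set β)) (eB : β → β → Prop) (f : α → Option β) : Prop :=
  PreservesEqv eA eB f ∧ ∀ x ∈ FA, pimage f x ∈ FB ∧
    ∀ a₁ ∈ x, ∀ a₂ ∈ x, ∀ b₁ b₂, f a₁ = some b₁ → f a₂ = some b₂ → eB b₁ b₂ → eA a₁ a₂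

/-- A map of ese's: a map of equivalence families between the families of
configurations with their equivalences. -/
def IsESEMap {P : Type u} {Q : Type v} (DP : ESEData P) (DQ : ESEData Q)
    (f : P → Option Q) : Prop :=
  IsEFMap (Cfgs DP) DP.eqv (Cfgs DQ) DQ.eqv f

/-- Equivalence of partial maps: equidefined with equivalent results. -/
def MapEqv {α : Type u} {β : Type v} (eB : β → β → Prop) (f g : α → Option β) : Prop :=
  ∀ a, (f a = none ∧ g a = none) ∨ ∃ b₁ b₂, f a = some b₁ ∧ g a = some b₂ ∧ eB b₁ b₂

/-- The causal dependency of the causal unfolding: `p' ≤ p` iff there is a map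
of realisations from `p` to `p'`. -/
def erLe {A : Type u} {C : ConfigFamily A} (P : Set (Realisation C)) (p' p : ↥P) : Prop :=
  Nonempty (RealMap p.val p'.val)

/-- `P` is a choice of one prime extremal realisation from each isomorphism
class of prime extremal realisations of the family. -/
def erChoice {A : Type u} {C : ConfigFamily A} (P : Set (Realisation C)) : Prop :=
  (∀ p ∈ P, Realisation.PrimeExtremal p) ∧
  ∀ r : Realisation C, r.PrimeExtremal → ∃! p, p ∈ P ∧ RealIso p r

/-- `mx` sends each chosen prime extremal realisation to the image of its top
element. -/
def erMax {A : Type u} {C : ConfigFamily A} {P : Set (Realisation C)} (mx : ↥P → A) : Prop :=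
  ∀ p : ↥P, ∃ t : p.val.carrier, (∀ a, p.val.le a t) ∧ mx p = p.val.ρ t

/-- The causal unfolding `er(A)` of an equivalence family, as an ese on the
chosen prime extremal realisations `P`: causal dependency is `erLe`; a finite
set is consistent when the image under `mx` of its down-closure is a
configuration; two primes are equivalent when their tops are. -/
def erData {A : Type u} {C : ConfigFamily A} (P : Set (Realisation C))
    (eqA : A → A → Prop) (mx : ↥P → A) : ESEData ↥P where
  le := erLe P
  Con := {X | X.Finite ∧ mx '' {p | ∃ q ∈ X, erLe P p q} ∈ C.F}
  eqv := fun p₁ p₂ => eqA (mx p₁) (mx p₂)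

open Classical

noncomputable section AuxER

namespace AuxER

variable {A : Type u} {C : ConfigFamily A}

/-! ### Basic lemmas on pimage -/

theorem mem_pimage {α : Type u} {β : Type v} {f : α → Option β} {x : Set α} {b : β} :
    b ∈ pimage f x ↔ ∃ a ∈ x, f a = some b := Iff.rfl

/-! ### past sets -/

def past (r : Realisation C) (a : r.carrier) : Set r.carrier := {b | r.le b a}

theorem past_down (r : Realisation C) (a : r.carrier) : r.IsDown (past r a) :=
  fun c hc b hb => r.le_trans _ _ _ hb hc

theorem le_iff_down (r : Realisation C) (a b : r.carrier) :
    r.le b a ↔ ∀ y, r.IsDown y → a ∈ y → b ∈ y := by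
  constructor
  · intro h y hy ha; exact hy a ha b h
  · intro h; exact h (past r a) (past_down r a) (r.le_refl a)

/-! ### restriction of a realisation to a down-closed set -/

def restrict (r : Realisation C) (x : Set r.carrier) (hx : r.IsDown x) : Realisation C where
  carrier := ↥x
  le a b := r.le a.1 b.1
  le_refl a := r.le_refl a.1
  le_trans a b c h1 h2 := r.le_trans _ _ _ h1 h2
  le_antisymm a b h1 h2 := Subtype.ext (r.le_antisymm _ _ h1 h2)
  finPast e := by
    have : {e' : ↥x | r.le e'.1 e.1} = Subtype.val ⁻¹' {e' | r.le e' e.1} := rfl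
    rw [this]
    exact Set.Finite.preimage (Subtype.val_injective.injOn) (r.finPast e.1)
  ρ a := r.ρ a.1
  real y hy := by
    have hdown : r.IsDown (Subtype.val '' y) := by
      rintro a ⟨a', ha', rfl⟩ b hb
      have hbx : b ∈ x := hx a'.1 a'.2 b hb
      exact ⟨⟨b, hbx⟩, hy a' ha' ⟨b, hbx⟩ hb, rfl⟩
    have := r.real _ hdown
    rwa [Set.image_image] at this

theorem restrict_le {r : Realisation C} {x : Set r.carrier} {hx : r.IsDown x}
    (a b : ↥x) : (restrict r x hx).le a b ↔ r.le a.1 b.1 := Iff.rfl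

/-! ### identity, composition, projections -/

def idMap (r : Realisation C) : RealMap r r where
  f a := some a
  surj b := ⟨b, rfl⟩
  presDown x hx := by
    have : pimage (fun a => some a) x = x := by
      ext b; constructor
      · rintro ⟨a, ha, h⟩; cases Option.some_injective _ h; exact ha
      · intro hb; exact ⟨b, hb, rfl⟩
    rwa [this]
  commutes a b h := by cases Option.some_injective _ h; rfl

def comp {r r' r'' : Realisation C} (m₁ : RealMap r r') (m₂ : RealMap r' r'') :
    RealMap r r'' where
  f a := (m₁.f a).bind m₂.f
  surj c := by
    obtain ⟨b, hb⟩ := m₂.surj c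
    obtain ⟨a, ha⟩ := m₁.surj b
    exact ⟨a, by show (m₁.f a).bind m₂.f = some c; rw [ha]; exact hb⟩
  presDown x hx := by
    have h : pimage (fun a => (m₁.f a).bind m₂.f) x = pimage m₂.f (pimage m₁.f x) := by
      ext c; constructor
      · rintro ⟨a, ha, h⟩
        rcases Option.bind_eq_some_iff.mp h with ⟨b, hb1, hb2⟩
        exact ⟨b, ⟨a, ha, hb1⟩, hb2⟩
      · rintro ⟨b, ⟨a, ha, hb1⟩, hb2⟩
        exact ⟨a, ha, by show (m₁.f a).bind m₂.f = some c; rw [hb1]; exact hb2⟩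
    rw [h]
    exact m₂.presDown _ (m₁.presDown x hx)
  commutes a c h := by
    rcases Option.bind_eq_some_iff.mp h with ⟨b, hb1, hb2⟩
    rw [m₁.commutes a b hb1, m₂.commutes b c hb2]

theorem comp_f {r r' r'' : Realisation C} (m₁ : RealMap r r') (m₂ : RealMap r' r'')
    (a : r.carrier) : (comp m₁ m₂).f a = (m₁.f a).bind m₂.f := rfl

def projMap (r : Realisation C) (x : Set r.carrier) (hx : r.IsDown x) :
    RealMap r (restrict r x hx) where
  f a := if h : a ∈ x then some ⟨a, h⟩ else none
  surj b := ⟨b.1, by simp [b.2]; rfl⟩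
  presDown y hy := by
    intro b hb c hc
    rcases hb with ⟨a, ha, hab⟩
    by_cases h : a ∈ x
    · simp only [dif_pos h] at hab
      cases Option.some_injective _ hab
      have hcy : c.1 ∈ y := hy a ha c.1 hc
      exact ⟨c.1, hcy, by simp [c.2]; rfl⟩
    · simp [dif_neg h] at hab
  commutes a b h := by
    by_cases hax : a ∈ x
    · simp only [dif_pos hax] at h; cases Option.some_injective _ h; rfl
    · simp [dif_neg hax] at h

/-! ### label-order isomorphisms -/

def LOIso (r s : Realisation C) : Prop :=
  ∃ g : r.carrier ≃ s.carrier,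
    (∀ a b, r.le a b ↔ s.le (g a) (g b)) ∧ (∀ a, r.ρ a = s.ρ (g a))

theorem LOIso.refl (r : Realisation C) : LOIso r r :=
  ⟨Equiv.refl _, fun _ _ => Iff.rfl, fun _ => rfl⟩

theorem LOIso.symm {r s : Realisation C} : LOIso r s → LOIso s r := by
  rintro ⟨g, ho, hl⟩
  refine ⟨g.symm, fun a b => ?_, fun a => ?_⟩
  · rw [ho (g.symm a) (g.symm b)]; simp
  · rw [hl (g.symm a)]; simp

theorem LOIso.trans {r s t : Realisation C} : LOIso r s → LOIso s t → LOIso r t := by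
  rintro ⟨g, ho, hl⟩ ⟨g', ho', hl'⟩
  exact ⟨g.trans g', fun a b => (ho a b).trans (ho' _ _), fun a => (hl a).trans (hl' _)⟩

/-- A RealMap whose function is `some ∘ g` for a label-order equivalence. -/
def equivMap {r s : Realisation C} (g : r.carrier ≃ s.carrier)
    (ho : ∀ a b, r.le a b ↔ s.le (g a) (g b)) (hl : ∀ a, r.ρ a = s.ρ (g a)) :
    RealMap r s where
  f a := some (g a)
  surj b := ⟨g.symm b, by simp⟩
  presDown x hx := by
    intro b hb c hc
    rcases hb with ⟨a, ha, hab⟩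
    cases Option.some_injective _ hab
    refine ⟨g.symm c, hx a ha (g.symm c) ?_, by simp⟩
    rw [ho (g.symm c) a]; simpa using hc
  commutes a b h := by cases Option.some_injective _ h; exact hl a

theorem equivMap_total {r s : Realisation C} (g : r.carrier ≃ s.carrier)
    (ho : ∀ a b, r.le a b ↔ s.le (g a) (g b)) (hl : ∀ a, r.ρ a = s.ρ (g a)) :
    (equivMap g ho hl).IsTotal := fun a => ⟨g a, rfl⟩

/-- Criterion: a map which is `some ∘ g` for a label-order equivalence is an iso. -/
theorem equiv_is_iso {r s : Realisation C} (m : RealMap r s) (g : r.carrier ≃ s.carrier)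
    (hg : ∀ a, m.f a = some (g a))
    (ho : ∀ a b, r.le a b ↔ s.le (g a) (g b)) (hl : ∀ a, r.ρ a = s.ρ (g a)) :
    m.IsIso := by
  have ho' : ∀ a b, s.le a b ↔ r.le (g.symm a) (g.symm b) := by
    intro a b; rw [ho (g.symm a) (g.symm b)]; simp
  have hl' : ∀ a, s.ρ a = r.ρ (g.symm a) := by
    intro a; rw [hl (g.symm a)]; simp
  refine ⟨equivMap g.symm ho' hl', fun a b => ?_⟩
  show m.f a = some b ↔ some (g.symm b) = some a
  rw [hg a]
  constructor
  · intro h; cases Option.some_injective _ h; simp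
  · intro h
    have : g.symm b = a := Option.some_injective _ h
    rw [← this]; simp

theorem loiso_realiso {r s : Realisation C} (h : LOIso r s) : RealIso r s := by
  obtain ⟨g, ho, hl⟩ := h
  exact ⟨equivMap g ho hl, equiv_is_iso _ g (fun _ => rfl) ho hl⟩

/-- From an isomorphism of realisations, extract a label-order equivalence
compatible with the map. -/
theorem iso_equiv {r s : Realisation C} (m : RealMap r s) (h : m.IsIso) :
    ∃ g : r.carrier ≃ s.carrier, (∀ a, m.f a = some (g a)) ∧
      (∀ a b, r.le a b ↔ s.le (g a) (g b)) ∧ (∀ a, s.ρ (g a) = r.ρ a) := by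
  obtain ⟨m', hmm'⟩ := h
  -- totality of m
  have htot : ∀ a, ∃ b, m.f a = some b := by
    intro a; obtain ⟨b, hb⟩ := m'.surj a; exact ⟨b, (hmm' a b).mpr hb⟩
  have hinj : ∀ a₁ a₂ b, m.f a₁ = some b → m.f a₂ = some b → a₁ = a₂ := by
    intro a₁ a₂ b h1 h2
    have h1' := (hmm' a₁ b).mp h1
    have h2' := (hmm' a₂ b).mp h2
    rw [h1'] at h2'; exact Option.some_injective _ h2'
  choose gf hgf using htot
  choose gi hgi using m.surj
  have hli : Function.LeftInverse gi gf := by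
    intro a; exact hinj _ _ _ (hgi (gf a)) (hgf a)
  have hri : Function.RightInverse gi gf := by
    intro b
    have := hgi b
    rw [hgf (gi b)] at this
    exact Option.some_injective _ this
  set g : r.carrier ≃ s.carrier := ⟨gf, gi, hli, hri⟩ with hgdef
  have key : ∀ a b, m.f a = some b ↔ g a = b := by
    intro a b
    constructor
    · intro h; exact Option.some_injective _ ((hgf a).symm.trans h)
    · rintro rfl; exact hgf a
  refine ⟨g, fun a => hgf a, fun a b => ?_, fun a => (m.commutes a (g a) (hgf a)).symm⟩
  constructor
  · intro hab
    rw [le_iff_down s]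
    intro y hy hb
    have hz : r.IsDown (pimage m'.f y) := m'.presDown y hy
    have hbz : b ∈ pimage m'.f y := ⟨g b, hb, (hmm' b (g b)).mp (hgf b)⟩
    have haz : a ∈ pimage m'.f y := hz b hbz a hab
    rcases haz with ⟨c, hc, hca⟩
    have : m.f a = some c := (hmm' a c).mpr hca
    rw [(key a c).mp this]; exact hc
  · intro hab
    rw [le_iff_down r]
    intro y hy hb
    have hz : s.IsDown (pimage m.f y) := m.presDown y hy
    have hbz : g b ∈ pimage m.f y := ⟨b, hb, hgf b⟩
    have haz : g a ∈ pimage m.f y := hz (g b) hbz (g a) hab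
    rcases haz with ⟨c, hc, hca⟩
    have : c = a := hinj c a (g a) hca (hgf a)
    rwa [this] at hc

theorem realiso_loiso {r s : Realisation C} (h : RealIso r s) : LOIso r s := by
  obtain ⟨m, hm⟩ := h
  obtain ⟨g, _, ho, hl⟩ := iso_equiv m hm
  exact ⟨g, ho, fun a => (hl a).symm⟩

theorem iso_of_maps_not_injective {r s : Realisation C} (m : RealMap r s)
    {a b : r.carrier} {c : s.carrier} (ha : m.f a = some c) (hb : m.f b = some c)
    (hne : a ≠ b) : ¬ m.IsIso := by
  rintro ⟨m', hmm'⟩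
  have h1 := (hmm' a c).mp ha
  have h2 := (hmm' b c).mp hb
  rw [h1] at h2
  exact hne (Option.some_injective _ h2)

end AuxER
namespace AuxER

variable {A : Type u} {C : ConfigFamily A}

theorem pimage_finite {α : Type u} {β : Type v} (f : α → Option β) {x : Set α}
    (hx : x.Finite) : (pimage f x).Finite := by
  have h : pimage f x = Option.some ⁻¹' (f '' x) := by
    ext b; constructor
    · rintro ⟨a, ha, hab⟩; exact ⟨a, ha, hab⟩
    · rintro ⟨a, ha, hab⟩; exact ⟨a, ha, hab⟩
  rw [h]
  exact Set.Finite.preimage ((Option.some_injective β).injOn) (hx.image f)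

/-! ### Factorization of a map of realisations: total followed by projection -/

section Glue

variable {r s : Realisation C} (m : RealMap r s)

def undef : Set r.carrier := {a | m.f a = none}

def glueLe : (s.carrier ⊕ ↥(undef m)) → (s.carrier ⊕ ↥(undef m)) → Prop
  | .inl b, .inl b' => s.le b b'
  | .inl b, .inr c => ∃ a, m.f a = some b ∧ r.le a c.1
  | .inr _, .inl _ => False
  | .inr c, .inr c' => r.le c.1 c'.1

def glue : Realisation C where
  carrier := s.carrier ⊕ ↥(undef m)
  le := glueLe m
  le_refl a := by cases a with
    | inl b => exact s.le_refl b
    | inr c => exact r.le_refl c.1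
  le_trans a b c h1 h2 := by
    cases a with
    | inl a => cases b with
      | inl b => cases c with
        | inl c => exact s.le_trans _ _ _ h1 h2
        | inr c =>
          obtain ⟨a₀, ha₀, hle⟩ := h2
          have hd : s.IsDown (pimage m.f (past r a₀)) := m.presDown _ (past_down r a₀)
          have hb : b ∈ pimage m.f (past r a₀) := ⟨a₀, r.le_refl a₀, ha₀⟩
          obtain ⟨a₁, ha₁, hma₁⟩ := hd b hb a h1
          exact ⟨a₁, hma₁, r.le_trans _ _ _ ha₁ hle⟩
      | inr b => cases c with
        | inl c => exact absurd h2 id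
        | inr c =>
          obtain ⟨a₀, ha₀, hle⟩ := h1
          exact ⟨a₀, ha₀, r.le_trans _ _ _ hle h2⟩
    | inr a => cases b with
      | inl b => exact absurd h1 id
      | inr b => cases c with
        | inl c => exact absurd h2 id
        | inr c => exact r.le_trans _ _ _ h1 h2
  le_antisymm a b h1 h2 := by
    cases a with
    | inl a => cases b with
      | inl b => exact congrArg Sum.inl (s.le_antisymm _ _ h1 h2)
      | inr b => exact absurd h2 id
    | inr a => cases b with
      | inl b => exact absurd h1 id
      | inr b => exact congrArg Sum.inr (Subtype.ext (r.le_antisymm _ _ h1 h2))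
  finPast e := by
    cases e with
    | inl b =>
      have hsub : {e' | glueLe m e' (.inl b)} ⊆ Sum.inl '' {b' | s.le b' b} := by
        intro e' he'
        cases e' with
        | inl b' => exact ⟨b', he', rfl⟩
        | inr c => exact absurd he' id
      exact Set.Finite.subset (Set.Finite.image _ (s.finPast b)) hsub
    | inr c =>
      have hsub : {e' | glueLe m e' (.inr c)} ⊆
          Sum.inl '' (pimage m.f (past r c.1)) ∪
          Sum.inr '' (Subtype.val ⁻¹' {a | r.le a c.1}) := by
        intro e' he'
        cases e' with
        | inl b' =>
          obtain ⟨a, ha, hle⟩ := he'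
          exact Or.inl ⟨b', ⟨a, hle, ha⟩, rfl⟩
        | inr c' => exact Or.inr ⟨c', he', rfl⟩
      refine Set.Finite.subset (Set.Finite.union
        (Set.Finite.image _ (pimage_finite m.f (r.finPast c.1)))
        (Set.Finite.image _
          (Set.Finite.preimage (Subtype.val_injective.injOn) (r.finPast c.1)))) hsub
  ρ := Sum.elim s.ρ (fun c => r.ρ c.1)
  real y hy := by
    set yl : Set s.carrier := {b | Sum.inl b ∈ y} with hyl
    set yr : Set ↥(undef m) := {c | Sum.inr c ∈ y} with hyr
    set w : Set r.carrier := {e | ∃ c ∈ yr, r.le e c.1} with hw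
    have hyld : s.IsDown yl := by
      intro b hb b' hb'
      exact hy (Sum.inl b) hb (Sum.inl b') hb'
    have hwd : r.IsDown w := by
      rintro e ⟨c, hc, hec⟩ e' he'
      exact ⟨c, hc, r.le_trans _ _ _ he' hec⟩
    have himg : Sum.elim s.ρ (fun c => r.ρ c.1) '' y = s.ρ '' yl ∪ r.ρ '' w := by
      apply Set.Subset.antisymm
      · rintro _ ⟨e, he, rfl⟩
        cases e with
        | inl b => exact Or.inl ⟨b, he, rfl⟩
        | inr c => exact Or.inr ⟨c.1, ⟨c, he, r.le_refl c.1⟩, rfl⟩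
      · rintro v (⟨b, hb, rfl⟩ | ⟨e, ⟨c, hc, hec⟩, rfl⟩)
        · exact ⟨Sum.inl b, hb, rfl⟩
        · rcases hme : m.f e with _ | b'
          · have : (⟨e, hme⟩ : ↥(undef m)) ∈ yr :=
              hy (Sum.inr c) hc (Sum.inr ⟨e, hme⟩) hec
            exact ⟨Sum.inr ⟨e, hme⟩, this, rfl⟩
          · have hin : Sum.inl b' ∈ y :=
              hy (Sum.inr c) hc (Sum.inl b') ⟨e, hme, hec⟩
            exact ⟨Sum.inl b', hin, (m.commutes e b' hme).symm⟩
    rw [himg]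
    have h1 : s.ρ '' yl ∈ C.F := s.real yl hyld
    have h2 : r.ρ '' w ∈ C.F := r.real w hwd
    have huniv : r.ρ '' Set.univ ∈ C.F := r.real Set.univ (fun _ _ _ _ => trivial)
    have hsub1 : s.ρ '' yl ⊆ r.ρ '' Set.univ := by
      rintro _ ⟨b, _, rfl⟩
      obtain ⟨a, ha⟩ := m.surj b
      exact ⟨a, trivial, m.commutes a b ha⟩
    have hsub2 : r.ρ '' w ⊆ r.ρ '' Set.univ := Set.image_mono (Set.subset_univ _)
    have := C.unionClosed {s.ρ '' yl, r.ρ '' w} ?_ ?_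
    · rwa [Set.sUnion_pair] at this
    · rintro z (rfl | rfl)
      · exact h1
      · exact h2
    · intro Y hY _
      refine ⟨r.ρ '' Set.univ, huniv, ?_⟩
      intro u hu
      rcases hY hu with rfl | rfl
      · exact hsub1
      · exact hsub2

end Glue

end AuxER
namespace AuxER

variable {A : Type u} {C : ConfigFamily A}

section Glue2

variable {r s : Realisation C} (m : RealMap r s)

/-- The explicit function underlying the total part of the factorization. -/
def glueFun (a : r.carrier) : s.carrier ⊕ ↥(undef m) :=
  if h : m.f a = none then .inr ⟨a, h⟩
  else .inl ((m.f a).get (Option.ne_none_iff_isSome.mp h))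

theorem glueFun_of_some {a : r.carrier} {b : s.carrier} (h : m.f a = some b) :
    glueFun m a = .inl b := by
  have hne : m.f a ≠ none := by simp [h]
  simp only [glueFun, dif_neg hne]
  congr 1
  simp [h]

theorem glueFun_of_none {a : r.carrier} (h : m.f a = none) :
    glueFun m a = .inr ⟨a, h⟩ := by simp [glueFun, dif_pos h]

def glueE : RealMap r (glue m) where
  f a := some (glueFun m a)
  surj b := by
    cases b with
    | inl b =>
      obtain ⟨a, ha⟩ := m.surj b
      exact ⟨a, by show some (glueFun m a) = _; rw [glueFun_of_some m ha]; rfl⟩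
    | inr c =>
      exact ⟨c.1, by show some (glueFun m c.1) = _; rw [glueFun_of_none m c.2]; rfl⟩
  presDown y hy := by
    intro β hβ γ hγ
    obtain ⟨a, ha, haβ⟩ := hβ
    cases Option.some_injective _ haβ
    cases hfa : m.f a with
    | some b =>
      rw [glueFun_of_some m hfa] at hγ
      cases γ with
      | inl b' =>
        have : b ∈ pimage m.f y := ⟨a, ha, hfa⟩
        obtain ⟨a', ha', hfa'⟩ := m.presDown y hy b this b' hγ
        exact ⟨a', ha', by show some (glueFun m a') = _; rw [glueFun_of_some m hfa']; rfl⟩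
      | inr c => exact absurd hγ id
    | none =>
      rw [glueFun_of_none m hfa] at hγ
      cases γ with
      | inl b' =>
        obtain ⟨a', hfa', hle⟩ := hγ
        have ha' : a' ∈ y := hy a ha a' hle
        exact ⟨a', ha', by show some (glueFun m a') = _; rw [glueFun_of_some m hfa']; rfl⟩
      | inr c =>
        have hle : r.le c.1 a := hγ
        have hcy : c.1 ∈ y := hy a ha c.1 hle
        exact ⟨c.1, hcy, by show some (glueFun m c.1) = _; rw [glueFun_of_none m c.2]; rfl⟩
  commutes a β h := by
    cases Option.some_injective _ h
    cases hfa : m.f a with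
    | some b => rw [glueFun_of_some m hfa]; exact m.commutes a b hfa
    | none => rw [glueFun_of_none m hfa]; rfl

theorem glueE_total : (glueE m).IsTotal := fun a => ⟨glueFun m a, rfl⟩

theorem glueE_f (a : r.carrier) : (glueE m).f a = some (glueFun m a) := rfl

end Glue2

/-! ### Maps from extremal realisations are projections onto down-closed sets -/

def dom {r s : Realisation C} (m : RealMap r s) : Set r.carrier := {a | m.f a ≠ none}

theorem ext_proj {r s : Realisation C} (hr : r.Extremal) (m : RealMap r s) :
    r.IsDown (dom m) ∧ ∃ g : ↥(dom m) ≃ s.carrier,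
      (∀ a : ↥(dom m), m.f a.1 = some (g a)) ∧
      (∀ a b : ↥(dom m), r.le a.1 b.1 ↔ s.le (g a) (g b)) ∧
      (∀ a : ↥(dom m), r.ρ a.1 = s.ρ (g a)) := by
  have hiso := hr (glue m) (glueE m) (glueE_total m)
  obtain ⟨h, hh, ho, hl⟩ := iso_equiv (glueE m) hiso
  have hE : ∀ a, h a = glueFun m a := by
    intro a
    exact Option.some_injective _ ((hh a).symm.trans (glueE_f m a))
  -- extract g
  have hval : ∀ a : ↥(dom m), ∃ b, m.f a.1 = some b := by
    intro a
    cases hfa : m.f a.1 with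
    | some b => exact ⟨b, rfl⟩
    | none => exact absurd hfa a.2
  choose g hg using hval
  have hgl : ∀ a : ↥(dom m), h a.1 = .inl (g a) := by
    intro a; rw [hE a.1, glueFun_of_some m (hg a)]
  have hinj : Function.Injective g := by
    intro a a' hgg
    have : h a.1 = h a'.1 := by rw [hgl a, hgl a', hgg]
    exact Subtype.ext (h.injective this)
  have hsurj : Function.Surjective g := by
    intro b
    obtain ⟨a, ha⟩ := h.surjective (.inl b)
    cases hfa : m.f a with
    | none =>
      rw [hE a, glueFun_of_none m hfa] at ha
      exact absurd ha (by simp)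
    | some b' =>
      have hadom : a ∈ dom m := by simp [dom, hfa]
      refine ⟨⟨a, hadom⟩, ?_⟩
      have := hgl ⟨a, hadom⟩
      rw [ha] at this
      exact (Sum.inl_injective this).symm
  have hdown : r.IsDown (dom m) := by
    intro a ha b hb
    have hle : (glue m).le (h b) (h a) := (ho b a).mp hb
    rw [hgl ⟨a, ha⟩] at hle
    cases hhb : h b with
    | inl b' =>
      cases hfb : m.f b with
      | some c => simp [dom, hfb]
      | none =>
        rw [hE b, glueFun_of_none m hfb] at hhb
        exact absurd hhb (by simp)
    | inr c => rw [hhb] at hle; exact absurd hle id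
  refine ⟨hdown, Equiv.ofBijective g ⟨hinj, hsurj⟩, hg, ?_, ?_⟩
  · intro a b
    rw [ho a.1 b.1]
    show _ ↔ s.le (g a) (g b)
    rw [hgl a, hgl b]
    exact Iff.rfl
  · intro a
    show r.ρ a.1 = s.ρ (g a)
    have := hl a.1
    rw [hgl a] at this
    exact this.symm

theorem restrict_extremal {r : Realisation C} (hr : r.Extremal)
    (x : Set r.carrier) (hx : r.IsDown x) : (restrict r x hx).Extremal := by
  intro s m mtot
  set μ : RealMap r s := comp (projMap r x hx) m with hμ
  have hdomμ : ∀ a, (a ∈ dom μ ↔ a ∈ x) := by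
    intro a
    constructor
    · intro ha
      by_contra hax
      apply ha
      show ((projMap r x hx).f a).bind m.f = none
      show (if h : a ∈ x then some ⟨a, h⟩ else none).bind m.f = none
      rw [dif_neg hax]; rfl
    · intro hax
      obtain ⟨b, hb⟩ := mtot ⟨a, hax⟩
      show ((projMap r x hx).f a).bind m.f ≠ none
      show (if h : a ∈ x then some (⟨a, h⟩ : ↥x) else none).bind m.f ≠ none
      rw [dif_pos hax]
      show m.f ⟨a, hax⟩ ≠ none
      rw [hb]; simp
  have hμf : ∀ a : ↥x, μ.f a.1 = m.f a := by
    intro a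
    show (if h : a.1 ∈ x then some (⟨a.1, h⟩ : ↥x) else none).bind m.f = m.f a
    rw [dif_pos a.2]
    rfl
  obtain ⟨hdown, g, hg, ho, hl⟩ := ext_proj hr μ
  -- reindex g from ↥(dom μ) to ↥x
  have hmem : ∀ a : ↥x, a.1 ∈ dom μ := fun a => (hdomμ a.1).mpr a.2
  have hmem' : ∀ a : ↥(dom μ), a.1 ∈ x := fun a => (hdomμ a.1).mp a.2
  set g' : ↥x → s.carrier := fun a => g ⟨a.1, hmem a⟩ with hg'
  have hgval : ∀ a : ↥x, m.f a = some (g' a) := by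
    intro a
    rw [← hμf a]
    exact hg ⟨a.1, hmem a⟩
  have hinj : Function.Injective g' := by
    intro a a' h
    have h2 : (⟨a.1, hmem a⟩ : ↥(dom μ)) = ⟨a'.1, hmem a'⟩ := g.injective h
    exact Subtype.ext (Subtype.mk_eq_mk.mp h2)
  have hsurj : Function.Surjective g' := by
    intro b
    obtain ⟨a, ha⟩ := g.surjective b
    exact ⟨⟨a.1, hmem' a⟩, by rw [hg']; simpa using ha⟩
  have hord : ∀ a b : ↥x, (restrict r x hx).le a b ↔ s.le (g' a) (g' b) := by
    intro a b
    exact ho ⟨a.1, hmem a⟩ ⟨b.1, hmem b⟩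
  have hlab : ∀ a : ↥x, (restrict r x hx).ρ a = s.ρ (g' a) := by
    intro a
    exact hl ⟨a.1, hmem a⟩
  exact equiv_is_iso m (Equiv.ofBijective g' ⟨hinj, hsurj⟩) hgval hord hlab

end AuxER
namespace AuxER

variable {A : Type u} {C : ConfigFamily A}

theorem prime_past {r : Realisation C} (hr : r.Extremal) (a : r.carrier) :
    (restrict r (past r a) (past_down r a)).PrimeExtremal := by
  refine ⟨restrict_extremal hr _ _, ⟨⟨a, r.le_refl a⟩, fun c => c.2⟩⟩

/-- Extremality transfers along label-order isomorphisms. -/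
theorem loiso_extremal {r s : Realisation C} (h : LOIso r s) (hr : r.Extremal) :
    s.Extremal := by
  obtain ⟨g, ho, hl⟩ := h
  intro t m mtot
  set m₂ : RealMap r t := comp (equivMap g ho hl) m with hm₂
  have hm₂f : ∀ a, m₂.f a = m.f (g a) := fun a => rfl
  have htot : m₂.IsTotal := by
    intro a
    obtain ⟨b, hb⟩ := mtot (g a)
    exact ⟨b, by rw [hm₂f, hb]⟩
  obtain ⟨k, hk, hko, hkl⟩ := iso_equiv m₂ (hr t m₂ htot)
  refine ⟨?_, ?_⟩
  · -- inverse map t → s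
    refine ⟨fun c => some (g (k.symm c)), fun b => ⟨k (g.symm b), by simp⟩, ?_, ?_⟩
    · intro y hy
      intro b hb b' hb'
      obtain ⟨c, hc, hcb⟩ := hb
      cases Option.some_injective _ hcb
      refine ⟨k (g.symm b'), ?_, by simp⟩
      have h1 : r.le (g.symm b') (k.symm c) := by
        rw [ho]
        simpa using hb'
      have h2 : t.le (k (g.symm b')) (k (k.symm c)) := (hko _ _).mp h1
      rw [k.apply_symm_apply] at h2
      exact hy c hc _ h2
    · intro c b hcb
      cases Option.some_injective _ hcb
      have h1 := hkl (k.symm c)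
      rw [k.apply_symm_apply] at h1
      rw [h1]; exact hl _
  · intro b c
    constructor
    · intro hbc
      have : m₂.f (g.symm b) = some c := by rw [hm₂f]; simpa using hbc
      have := Option.some_injective _ ((hk (g.symm b)).symm.trans this)
      show some (g (k.symm c)) = some b
      rw [← this]; simp
    · intro h
      have h1 : g (k.symm c) = b := Option.some_injective _ h
      have := hk (k.symm c)
      rw [hm₂f, h1, k.apply_symm_apply] at this
      exact this

/-- Double restriction is label-order isomorphic to a single restriction. -/
theorem restrict_restrict_loiso {r : Realisation C} {x : Set r.carrier} {hx : r.IsDown x}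
    (y : Set ↥x) (hy : (restrict r x hx).IsDown y) :
    LOIso (restrict (restrict r x hx) y hy)
      (restrict r (Subtype.val '' y)
        (by rintro a ⟨a', ha', rfl⟩ b hb
            exact ⟨⟨b, hx a'.1 a'.2 b hb⟩, hy a' ha' _ hb, rfl⟩)) := by
  refine ⟨⟨fun c => ⟨c.1.1, ⟨c.1, c.2, rfl⟩⟩, fun d => ⟨⟨d.1, ?_⟩, ?_⟩, ?_, ?_⟩, ?_, ?_⟩
  · obtain ⟨c, hc, hcv⟩ := d.2
    rw [← hcv]; exact c.2
  · obtain ⟨c, hc, hcv⟩ := d.2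
    have : (⟨d.1, ?_⟩ : ↥x) = c := Subtype.ext hcv.symm
    · rw [this]; exact hc
    · rw [← hcv]; exact c.2
  · intro c; apply Subtype.ext; apply Subtype.ext; rfl
  · intro d; apply Subtype.ext; rfl
  · intro a b; exact Iff.rfl
  · intro a; rfl

theorem restrict_congr_loiso {r : Realisation C} {x y : Set r.carrier} (h : x = y)
    (hx : r.IsDown x) (hy : r.IsDown y) :
    LOIso (restrict r x hx) (restrict r y hy) := by
  subst h
  exact LOIso.refl _

/-- A down-closed set with a maximum element is the past of that element. -/
theorem down_eq_past {r : Realisation C} {x : Set r.carrier} (hx : r.IsDown x)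
    {a : r.carrier} (ha : a ∈ x) (hmax : ∀ b ∈ x, r.le b a) : x = past r a := by
  apply Set.Subset.antisymm
  · intro b hb; exact hmax b hb
  · intro b hb; exact hx a ha b hb

/-- If `r` is extremal and `m : r → s` with `s` having a top, then `s` is
isomorphic to the past of an element of `r`. -/
theorem ext_proj_top {r s : Realisation C} (hr : r.Extremal) (m : RealMap r s)
    (hs : s.HasTop) :
    ∃ a : r.carrier, LOIso (restrict r (past r a) (past_down r a)) s := by
  obtain ⟨hdown, g, hg, ho, hl⟩ := ext_proj hr m
  obtain ⟨t, ht⟩ := hs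
  set a : ↥(dom m) := g.symm t with hadef
  have hmax : ∀ b ∈ dom m, r.le b a.1 := by
    intro b hb
    have := (ho ⟨b, hb⟩ a).mpr (by rw [hadef, g.apply_symm_apply]; exact ht (g ⟨b, hb⟩))
    exact this
  have hpast : dom m = past r a.1 := down_eq_past hdown a.2 hmax
  exact ⟨a.1, LOIso.trans (restrict_congr_loiso hpast.symm (past_down r a.1) hdown)
    ⟨g, ho, hl⟩⟩

end AuxER
namespace AuxER

variable {A : Type u} {C : ConfigFamily A}

/-- An extremal realisation has no "twins": distinct elements with equal labels
and equal strict pasts. -/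
theorem no_twins {r : Realisation C} (hr : r.Extremal) {a b : r.carrier}
    (hne : a ≠ b) (hlab : r.ρ a = r.ρ b) (hsp : r.spred a = r.spred b) : False := by
  have hspm : ∀ c, (r.le c a ∧ c ≠ a) ↔ (r.le c b ∧ c ≠ b) := by
    intro c
    constructor
    · intro h; have : c ∈ r.spred b := hsp ▸ h; exact this
    · intro h; have : c ∈ r.spred a := hsp ▸ h; exact this
  have hnab : ¬ r.le a b := by
    intro h
    exact ((hspm a).mpr ⟨h, hne⟩).2 rfl
  have hnba : ¬ r.le b a := by
    intro h
    exact ((hspm b).mp ⟨h, hne.symm⟩).2 rfl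
  set K : Set r.carrier := {c | c ≠ a} with hK
  have hbK : b ∈ K := hne.symm
  set bel : ↥K := ⟨b, hbK⟩ with hbel
  have hKa : ∀ c : r.carrier, ∀ h : ¬ c = a, c ∈ K := fun c h => h
  set mf : r.carrier → Option ↥K := fun c => if h : c = a then some bel else some ⟨c, hKa c h⟩
    with hmf
  have mf_a : mf a = some bel := by rw [hmf]; simp
  have mf_ne : ∀ c, (h : ¬ c = a) → mf c = some ⟨c, hKa c h⟩ := by
    intro c h; rw [hmf]; simp [h]
  set sle : ↥K → ↥K → Prop := fun c d => r.le c.1 d.1 ∨ (r.le c.1 b ∧ r.le a d.1) with hsle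
  set s : Realisation C :=
    { carrier := ↥K
      le := sle
      le_refl := fun c => Or.inl (r.le_refl c.1)
      le_trans := by
        rintro c d e (h1 | ⟨h1, h1'⟩) (h2 | ⟨h2, h2'⟩)
        · exact Or.inl (r.le_trans _ _ _ h1 h2)
        · exact Or.inr ⟨r.le_trans _ _ _ h1 h2, h2'⟩
        · exact Or.inr ⟨h1, r.le_trans _ _ _ h1' h2⟩
        · exact Or.inr ⟨h1, h2'⟩
      le_antisymm := by
        rintro c d (h1 | ⟨h1, h1'⟩) (h2 | ⟨h2, h2'⟩)
        · exact Subtype.ext (r.le_antisymm _ _ h1 h2)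
        · exact absurd (r.le_trans _ _ _ h2' (r.le_trans _ _ _ h1 h2)) hnab
        · exact absurd (r.le_trans _ _ _ h1' (r.le_trans _ _ _ h2 h1)) hnab
        · exact absurd (r.le_trans _ _ _ h1' h2) hnab
      finPast := by
        intro e
        have hsub : {c | sle c e} ⊆ Subtype.val ⁻¹' ({c | r.le c e.1} ∪ {c | r.le c b}) := by
          rintro c (h | ⟨h, _⟩)
          · exact Or.inl h
          · exact Or.inr h
        exact Set.Finite.subset
          (Set.Finite.preimage (Subtype.val_injective.injOn)
            ((r.finPast e.1).union (r.finPast b))) hsub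
      ρ := fun c => r.ρ c.1
      real := by
        intro y' hy'
        set z : Set r.carrier := Subtype.val '' y' ∪ {c | c = a ∧ bel ∈ y'} with hz
        have hzdown : r.IsDown z := by
          rintro d (⟨d', hd', rfl⟩ | ⟨hda, hbel'⟩) c hc
          · by_cases hca : c = a
            · subst hca
              have hbley : bel ∈ y' := by
                refine hy' d' hd' bel (Or.inr ⟨r.le_refl b, hc⟩)
              exact Or.inr ⟨rfl, hbley⟩
            · have : (⟨c, hca⟩ : ↥K) ∈ y' := hy' d' hd' ⟨c, hca⟩ (Or.inl hc)
              exact Or.inl ⟨⟨c, hca⟩, this, rfl⟩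
          · rw [hda] at hc
            by_cases hca : c = a
            · exact Or.inr ⟨hca, hbel'⟩
            · have hcb : r.le c b := ((hspm c).mp ⟨hc, hca⟩).1
              have : (⟨c, hca⟩ : ↥K) ∈ y' := hy' bel hbel' ⟨c, hca⟩ (Or.inl hcb)
              exact Or.inl ⟨⟨c, hca⟩, this, rfl⟩
        have himg : (fun c : ↥K => r.ρ c.1) '' y' = r.ρ '' z := by
          apply Set.Subset.antisymm
          · rintro _ ⟨d, hd, rfl⟩
            exact ⟨d.1, Or.inl ⟨d, hd, rfl⟩, rfl⟩
          · rintro _ ⟨c, (⟨c', hc', rfl⟩ | ⟨hca, hbel'⟩), rfl⟩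
            · exact ⟨c', hc', rfl⟩
            · rw [hca]; exact ⟨bel, hbel', hlab.symm⟩
        rw [himg]
        exact r.real z hzdown }
    with hs
  set m : RealMap r s :=
    { f := mf
      surj := by
        intro d
        exact ⟨d.1, by rw [mf_ne d.1 d.2]⟩
      presDown := by
        intro y hy
        have hchar : ∀ d : ↥K, d ∈ pimage mf y
            ↔ (d.1 ∈ y ∨ (d = bel ∧ a ∈ y)) := by
          intro d
          constructor
          · rintro ⟨e, he, hme⟩
            by_cases hea : e = a
            · rw [hea, mf_a] at hme
              exact Or.inr ⟨(Option.some_injective _ hme).symm, hea ▸ he⟩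
            · rw [mf_ne e hea] at hme
              have := Option.some_injective _ hme
              rw [← this]
              exact Or.inl he
          · rintro (hd | ⟨rfl, ha⟩)
            · exact ⟨d.1, hd, by rw [mf_ne d.1 d.2]⟩
            · exact ⟨a, ha, mf_a⟩
        intro d hd c hc
        rw [hchar] at hd
        rw [hchar]
        rcases hd with hd | ⟨rfl, ha⟩
        · rcases hc with hc | ⟨hc, hc'⟩
          · exact Or.inl (hy d.1 hd c.1 hc)
          · have hay : a ∈ y := hy d.1 hd a hc'
            by_cases hcb : c.1 = b
            · exact Or.inr ⟨Subtype.ext hcb, hay⟩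
            · have : r.le c.1 a := ((hspm c.1).mpr ⟨hc, hcb⟩).1
              exact Or.inl (hy a hay c.1 this)
        · rcases hc with hc | ⟨hc, hc'⟩
          · by_cases hcb : c.1 = b
            · exact Or.inr ⟨Subtype.ext hcb, ha⟩
            · have : r.le c.1 a := ((hspm c.1).mpr ⟨hc, hcb⟩).1
              exact Or.inl (hy a ha c.1 this)
          · exact absurd hc' hnab
      commutes := by
        intro c d h
        by_cases hca : c = a
        · rw [hca, mf_a] at h
          cases Option.some_injective _ h
          rw [hca]
          exact hlab
        · rw [mf_ne c hca] at h
          cases Option.some_injective _ h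
          rfl }
    with hm
  have hmtot : m.IsTotal := by
    intro c
    by_cases hca : c = a
    · exact ⟨bel, by show mf c = _; rw [hca, mf_a]⟩
    · exact ⟨⟨c, hca⟩, by show mf c = _; rw [mf_ne c hca]⟩
  have hiso := hr s m hmtot
  have hfa : m.f a = some bel := mf_a
  have hfb : m.f b = some bel := by
    show mf b = some bel
    rw [mf_ne b hne.symm]
  exact iso_of_maps_not_injective m hfa hfb hne hiso

end AuxER
namespace AuxER

variable {A : Type u} {C : ConfigFamily A}

theorem loiso_past_top {r : Realisation C} {a b : r.carrier}
    (g : ↥(past r a) ≃ ↥(past r b))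
    (ho : ∀ c d : ↥(past r a), r.le c.1 d.1 ↔ r.le (g c).1 (g d).1) :
    g ⟨a, r.le_refl a⟩ = ⟨b, r.le_refl b⟩ := by
  have h1 : r.le (g ⟨a, r.le_refl a⟩).1 b := (g ⟨a, r.le_refl a⟩).2
  have h2 : r.le b (g ⟨a, r.le_refl a⟩).1 := by
    have hg : (g (g.symm ⟨b, r.le_refl b⟩)).1 = b := by rw [g.apply_symm_apply]
    have := (ho (g.symm ⟨b, r.le_refl b⟩) ⟨a, r.le_refl a⟩).mp
      (g.symm ⟨b, r.le_refl b⟩).2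
    rwa [hg] at this
  exact Subtype.ext (r.le_antisymm _ _ h1 h2)

theorem loiso_sub_past {r : Realisation C} {a b : r.carrier}
    (g : ↥(past r a) ≃ ↥(past r b))
    (ho : ∀ c d : ↥(past r a), r.le c.1 d.1 ↔ r.le (g c).1 (g d).1)
    (hl : ∀ c : ↥(past r a), r.ρ c.1 = r.ρ (g c).1)
    (c : ↥(past r a)) :
    LOIso (restrict r (past r c.1) (past_down r c.1))
      (restrict r (past r (g c).1) (past_down r (g c).1)) := by
  have hfwd : ∀ e : ↥(past r c.1), (g ⟨e.1, r.le_trans _ _ _ e.2 c.2⟩).1 ∈ past r (g c).1 := by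
    intro e
    exact (ho ⟨e.1, r.le_trans _ _ _ e.2 c.2⟩ c).mp e.2
  have hbwd : ∀ d : ↥(past r (g c).1),
      (g.symm ⟨d.1, r.le_trans _ _ _ d.2 (g c).2⟩).1 ∈ past r c.1 := by
    intro d
    apply (ho (g.symm ⟨d.1, r.le_trans _ _ _ d.2 (g c).2⟩) c).mpr
    rw [g.apply_symm_apply]
    exact d.2
  refine ⟨⟨fun e => ⟨_, hfwd e⟩, fun d => ⟨_, hbwd d⟩, ?_, ?_⟩, ?_, ?_⟩
  · intro e
    apply Subtype.ext
    show (g.symm ⟨(g ⟨e.1, _⟩).1, _⟩).1 = e.1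
    have h1 : (⟨(g ⟨e.1, r.le_trans _ _ _ e.2 c.2⟩).1, _⟩ : ↥(past r b)) =
        g ⟨e.1, r.le_trans _ _ _ e.2 c.2⟩ := Subtype.ext rfl
    rw [h1, g.symm_apply_apply]
  · intro d
    apply Subtype.ext
    show (g ⟨(g.symm ⟨d.1, _⟩).1, _⟩).1 = d.1
    have h1 : (⟨(g.symm ⟨d.1, r.le_trans _ _ _ d.2 (g c).2⟩).1, _⟩ : ↥(past r a)) =
        g.symm ⟨d.1, r.le_trans _ _ _ d.2 (g c).2⟩ := Subtype.ext rfl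
    rw [h1, g.apply_symm_apply]
  · intro e e'
    exact ho ⟨e.1, r.le_trans _ _ _ e.2 c.2⟩ ⟨e'.1, r.le_trans _ _ _ e'.2 c.2⟩
  · intro e
    exact hl ⟨e.1, r.le_trans _ _ _ e.2 c.2⟩

theorem past_ncard_lt {r : Realisation C} {a c : r.carrier} (hc : r.le c a) (hne : c ≠ a) :
    (past r c).ncard < (past r a).ncard := by
  have hss : past r c ⊂ past r a := by
    constructor
    · intro e he; exact r.le_trans _ _ _ he hc
    · intro hsub
      have : a ∈ past r c := hsub (r.le_refl a)
      exact hne (r.le_antisymm _ _ hc this)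
  exact Set.ncard_lt_ncard hss (r.finPast a)

theorem past_inj_aux {r : Realisation C} (hr : r.Extremal) :
    ∀ n, ∀ a b : r.carrier, (past r a).ncard ≤ n →
      LOIso (restrict r (past r a) (past_down r a)) (restrict r (past r b) (past_down r b)) →
      a = b := by
  intro n
  induction n with
  | zero =>
    intro a b hcard _
    exfalso
    have : a ∈ past r a := r.le_refl a
    have hpos : 0 < (past r a).ncard :=
      (Set.ncard_pos (r.finPast a)).mpr ⟨a, this⟩
    omega
  | succ n IH =>
    intro a b hcard hiso
    obtain ⟨g, ho, hl⟩ := hiso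
    -- ho, hl are about the restrictions; unfold to r
    have ho' : ∀ c d : ↥(past r a), r.le c.1 d.1 ↔ r.le (g c).1 (g d).1 := ho
    have hl' : ∀ c : ↥(past r a), r.ρ c.1 = r.ρ (g c).1 := hl
    by_cases hab : a = b
    · exact hab
    -- equal cardinalities
    have hcardeq : (past r a).ncard = (past r b).ncard := by
      rw [← Nat.card_coe_set_eq, ← Nat.card_coe_set_eq]
      exact Nat.card_congr g
    -- incomparability
    have hnab : ¬ r.le a b := by
      intro h
      have hsub : past r a ⊆ past r b := fun e he => r.le_trans _ _ _ he h
      have : past r a = past r b :=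
        Set.eq_of_subset_of_ncard_le hsub (le_of_eq hcardeq.symm) (r.finPast b)
      have hba : b ∈ past r a := by rw [this]; exact r.le_refl b
      exact hab (r.le_antisymm _ _ h hba)
    have hnba : ¬ r.le b a := by
      intro h
      have hsub : past r b ⊆ past r a := fun e he => r.le_trans _ _ _ he h
      have : past r b = past r a :=
        Set.eq_of_subset_of_ncard_le hsub (le_of_eq hcardeq) (r.finPast a)
      have hba : a ∈ past r b := by rw [this]; exact r.le_refl a
      exact hab (r.le_antisymm _ _ hba h)
    -- fixpoint property for strict predecessors
    have hfix : ∀ c : ↥(past r a), c.1 ≠ a → (g c).1 = c.1 := by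
      intro c hcne
      have hlt : (past r c.1).ncard < (past r a).ncard := past_ncard_lt c.2 hcne
      have hle : (past r c.1).ncard ≤ n := by omega
      exact (IH c.1 (g c).1 hle (loiso_sub_past g ho' hl' c)).symm
    -- the inverse fixpoint property
    have hsymmho : ∀ c d : ↥(past r b), r.le c.1 d.1 ↔ r.le (g.symm c).1 (g.symm d).1 := by
      intro c d
      rw [ho' (g.symm c) (g.symm d)]
      have e1 : (g (g.symm c)).1 = c.1 := congrArg Subtype.val (g.apply_symm_apply c)
      have e2 : (g (g.symm d)).1 = d.1 := congrArg Subtype.val (g.apply_symm_apply d)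
      rw [e1, e2]
    have hfix' : ∀ d : ↥(past r b), d.1 ≠ b → (g.symm d).1 = d.1 := by
      intro d hdne
      have htop : g ⟨a, r.le_refl a⟩ = ⟨b, r.le_refl b⟩ := loiso_past_top g ho'
      have hgda : (g.symm d).1 ≠ a := by
        intro h
        have : g.symm d = ⟨a, r.le_refl a⟩ := Subtype.ext h
        have : d = g ⟨a, r.le_refl a⟩ := by rw [← this]; exact (g.apply_symm_apply d).symm
        rw [htop] at this
        exact hdne (congrArg Subtype.val this)
      have h1 := hfix ⟨(g.symm d).1, (g.symm d).2⟩ hgda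
      have h2 : (⟨(g.symm d).1, (g.symm d).2⟩ : ↥(past r a)) = g.symm d := Subtype.ext rfl
      rw [h2] at h1
      have e3 : (g (g.symm d)).1 = d.1 := congrArg Subtype.val (g.apply_symm_apply d)
      rw [e3] at h1
      exact h1.symm ▸ rfl
    -- equal strict pasts
    have hsp : r.spred a = r.spred b := by
      apply Set.Subset.antisymm
      · rintro c ⟨hc, hcne⟩
        have h1 : (g ⟨c, hc⟩).1 = c := hfix ⟨c, hc⟩ hcne
        have h2 : r.le c b := h1 ▸ (g ⟨c, hc⟩).2
        refine ⟨h2, ?_⟩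
        intro hcb
        rw [hcb] at hc
        exact hnba hc
      · rintro d ⟨hd, hdne⟩
        have h1 : (g.symm ⟨d, hd⟩).1 = d := hfix' ⟨d, hd⟩ hdne
        have h2 : r.le d a := h1 ▸ (g.symm ⟨d, hd⟩).2
        refine ⟨h2, ?_⟩
        intro hda
        rw [hda] at hd
        exact hnab hd
    -- equal labels
    have hlab : r.ρ a = r.ρ b := by
      have h1 : r.ρ a = r.ρ (g ⟨a, r.le_refl a⟩).1 := hl' ⟨a, r.le_refl a⟩
      have h2 : r.ρ (g ⟨a, r.le_refl a⟩).1 = r.ρ b :=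
        congrArg (fun z : ↥(past r b) => r.ρ z.1) (loiso_past_top g ho')
      exact h1.trans h2
    exact absurd (no_twins hr hab hlab hsp) (fun h => h)

theorem past_inj {r : Realisation C} (hr : r.Extremal) {a b : r.carrier}
    (h : LOIso (restrict r (past r a) (past_down r a))
      (restrict r (past r b) (past_down r b))) : a = b :=
  past_inj_aux hr (past r a).ncard a b (le_refl _) h

end AuxER
namespace AuxER

variable {A : Type u} {C : ConfigFamily A}

/-- Double restriction to a past inside a past. -/
theorem double_past_loiso {r : Realisation C} {b : r.carrier} (c : ↥(past r b)) :
    LOIso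
      (restrict (restrict r (past r b) (past_down r b))
        (past (restrict r (past r b) (past_down r b)) c)
        (past_down (restrict r (past r b) (past_down r b)) c))
      (restrict r (past r c.1) (past_down r c.1)) := by
  refine ⟨⟨fun e => ⟨e.1.1, e.2⟩, fun d => ⟨⟨d.1, r.le_trans _ _ _ d.2 c.2⟩, d.2⟩,
    ?_, ?_⟩, ?_, ?_⟩
  · intro e; apply Subtype.ext; apply Subtype.ext; rfl
  · intro d; apply Subtype.ext; rfl
  · intro e e'; exact Iff.rfl
  · intro e; rfl

theorem core {P : Set (Realisation C)} (hP : erChoice P) {mx : ↥P → A} (hmx : erMax mx)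
    {r : Realisation C} (hr : r.Extremal) :
    ∃ φ : r.carrier → ↥P,
      Function.Injective φ ∧
      (∀ a, Nonempty (RealMap r (φ a).val)) ∧
      ({p : ↥P | Nonempty (RealMap r p.val)} = Set.range φ) ∧
      (∀ a b, (erLe P (φ a) (φ b) ↔ r.le a b)) ∧
      (∀ a, mx (φ a) = r.ρ a) ∧
      (∀ a, RealIso (φ a).val (restrict r (past r a) (past_down r a))) := by
  have hchoice := fun a => hP.2 (restrict r (past r a) (past_down r a)) (prime_past hr a)
  choose φ0 hmain huniq using hchoice
  have hmem : ∀ a, φ0 a ∈ P := fun a => (hmain a).1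
  have hiso : ∀ a, RealIso (φ0 a) (restrict r (past r a) (past_down r a)) :=
    fun a => (hmain a).2
  set φ : r.carrier → ↥P := fun a => ⟨φ0 a, hmem a⟩ with hφ
  -- injectivity
  have hinj : Function.Injective φ := by
    intro a b hab
    have h0 : φ0 a = φ0 b := congrArg Subtype.val hab
    have La := realiso_loiso (hiso a)
    have Lb := realiso_loiso (hiso b)
    rw [h0] at La
    exact past_inj hr (La.symm.trans Lb)
  -- maps r → φ a
  have hmap : ∀ a, Nonempty (RealMap r (φ a).val) := by
    intro a
    obtain ⟨m, m', hmm'⟩ := hiso a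
    exact ⟨comp (projMap r (past r a) (past_down r a)) m'⟩
  -- range characterization
  have hrange : {p : ↥P | Nonempty (RealMap r p.val)} = Set.range φ := by
    apply Set.Subset.antisymm
    · rintro p ⟨m⟩
      have hprime : p.val.PrimeExtremal := hP.1 p.val p.2
      obtain ⟨a, hLa⟩ := ext_proj_top hr m hprime.2
      have : p.val = φ0 a := huniq a p.val ⟨p.2, loiso_realiso hLa.symm⟩
      exact ⟨a, Subtype.ext this.symm⟩
    · rintro _ ⟨a, rfl⟩
      exact hmap a
  -- order correspondence
  have horder : ∀ a b, erLe P (φ a) (φ b) ↔ r.le a b := by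
    intro a b
    constructor
    · rintro ⟨m⟩
      -- m : φ0 b → φ0 a; conjugate to a map (restr b) → (restr a)
      obtain ⟨ma, ma', hma⟩ := hiso a
      obtain ⟨mb, mb', hmb⟩ := hiso b
      set ν : RealMap (restrict r (past r b) (past_down r b))
          (restrict r (past r a) (past_down r a)) := comp (comp mb' m) ma with hν
      have hbext := restrict_extremal hr (past r b) (past_down r b)
      have hatop : (restrict r (past r a) (past_down r a)).HasTop :=
        ⟨⟨a, r.le_refl a⟩, fun c => c.2⟩
      obtain ⟨c, hLc⟩ := ext_proj_top hbext ν hatop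
      have hL2 := (double_past_loiso c).symm.trans hLc
      have := past_inj hr hL2
      rw [← this]
      exact c.2
    · intro hab
      obtain ⟨ma, ma', hma⟩ := hiso a
      obtain ⟨mb, mb', hmb⟩ := hiso b
      set c : ↥(past r b) := ⟨a, hab⟩ with hc
      obtain ⟨gd, hgo, hgl⟩ := double_past_loiso c
      refine ⟨comp (comp mb (projMap (restrict r (past r b) (past_down r b))
        (past (restrict r (past r b) (past_down r b)) c)
        (past_down (restrict r (past r b) (past_down r b)) c)))
        (comp (equivMap gd hgo hgl) ma')⟩
  -- labels
  have hlab : ∀ a, mx (φ a) = r.ρ a := by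
    intro a
    obtain ⟨t, ht, hmxt⟩ := hmx (φ a)
    obtain ⟨g, hgo, hgl⟩ := realiso_loiso (hiso a)
    have hmax : ∀ d : ↥(past r a), (restrict r (past r a) (past_down r a)).le d (g t) := by
      intro d
      have h1 : (φ a).val.le (g.symm d) t := ht (g.symm d)
      have h2 := (hgo (g.symm d) t).mp h1
      rwa [show g (g.symm d) = d from g.apply_symm_apply d] at h2
    have htop : (g t).1 = a := by
      have h1 : (restrict r (past r a) (past_down r a)).le (g t) ⟨a, r.le_refl a⟩ := (g t).2
      have h2 := hmax ⟨a, r.le_refl a⟩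
      exact r.le_antisymm _ _ h1 h2
    rw [hmxt, hgl t]
    show r.ρ (g t).1 = r.ρ a
    rw [htop]
  exact ⟨φ, hinj, hmap, hrange, horder, hlab, fun a => hiso a⟩

end AuxER
namespace AuxER

variable {A : Type u} {C : ConfigFamily A}

/-- Sufficient criterion for extremality: all pasts are extremal and pairwise
non-isomorphic. -/
theorem extremal_of_parts {r : Realisation C}
    (h1 : ∀ a, (restrict r (past r a) (past_down r a)).Extremal)
    (h2 : ∀ a b, LOIso (restrict r (past r a) (past_down r a))
      (restrict r (past r b) (past_down r b)) → a = b) :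
    r.Extremal := by
  intro s m mtot
  choose mval hval using mtot
  set Y : r.carrier → Set s.carrier := fun a => pimage m.f (past r a) with hY
  have hYdown : ∀ a, s.IsDown (Y a) := fun a => m.presDown _ (past_down r a)
  have hYmem : ∀ a, ∀ c : ↥(past r a), mval c.1 ∈ Y a := by
    intro a c
    exact ⟨c.1, c.2, hval c.1⟩
  -- the restricted maps
  set ma : ∀ a, RealMap (restrict r (past r a) (past_down r a))
      (restrict s (Y a) (hYdown a)) := fun a =>
    { f := fun c => some ⟨mval c.1, hYmem a c⟩
      surj := by
        rintro ⟨d, e, he, hme⟩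
        refine ⟨⟨e, he⟩, ?_⟩
        have : mval e = d := Option.some_injective _ ((hval e).symm.trans hme)
        exact congrArg some (Subtype.ext this)
      presDown := by
        intro z hz β hβ γ hγ
        obtain ⟨c, hc, hcβ⟩ := hβ
        cases Option.some_injective _ hcβ
        have hvz : r.IsDown (Subtype.val '' z) := by
          rintro e ⟨e', he', rfl⟩ f hf
          have hfp : f ∈ past r a := r.le_trans _ _ _ hf e'.2
          exact ⟨⟨f, hfp⟩, hz e' he' ⟨f, hfp⟩ hf, rfl⟩
        have hdown := m.presDown _ hvz
        have hβmem : mval c.1 ∈ pimage m.f (Subtype.val '' z) :=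
          ⟨c.1, ⟨c, hc, rfl⟩, hval c.1⟩
        have hγmem : γ.1 ∈ pimage m.f (Subtype.val '' z) := hdown _ hβmem γ.1 hγ
        obtain ⟨e, ⟨c', hc', rfl⟩, hme⟩ := hγmem
        refine ⟨c', hc', ?_⟩
        have : mval c'.1 = γ.1 := Option.some_injective _ ((hval c'.1).symm.trans hme)
        exact congrArg some (Subtype.ext this)
      commutes := by
        intro c d h
        cases Option.some_injective _ h
        exact m.commutes c.1 _ (hval c.1) }
    with hma
  have hmatot : ∀ a, (ma a).IsTotal := fun a c => ⟨_, rfl⟩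
  have hiso : ∀ a, ∃ g : ↥(past r a) ≃ ↥(Y a),
      (∀ c : ↥(past r a), (g c).1 = mval c.1) ∧
      (∀ c d : ↥(past r a), r.le c.1 d.1 ↔ s.le (g c).1 (g d).1) ∧
      (∀ c : ↥(past r a), r.ρ c.1 = s.ρ (g c).1) := by
    intro a
    obtain ⟨g, hg, ho, hl⟩ := iso_equiv (ma a) (h1 a _ (ma a) (hmatot a))
    refine ⟨g, ?_, ho, fun c => (hl c).symm⟩
    intro c
    have : (ma a).f c = some ⟨mval c.1, hYmem a c⟩ := rfl
    have h2' := (hg c).symm.trans this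
    exact congrArg Subtype.val (Option.some_injective _ h2')
  choose g hgval hgo hgl using hiso
  -- mval a is the maximum of Y a
  have hmax : ∀ a, ∀ d ∈ Y a, s.le d (mval a) := by
    intro a d hd
    obtain ⟨c, hc⟩ := (g a).surjective ⟨d, hd⟩
    have h1 : r.le c.1 a := c.2
    have h2 := (hgo a c ⟨a, r.le_refl a⟩).mp h1
    rw [hgval a c, hgval a ⟨a, r.le_refl a⟩] at h2
    have : mval c.1 = d := by rw [← hgval a c, hc]
    rwa [this] at h2
  have hpasteq : ∀ a, Y a = past s (mval a) := by
    intro a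
    apply Set.Subset.antisymm
    · intro d hd; exact hmax a d hd
    · intro d hd
      exact hYdown a (mval a) (hYmem a ⟨a, r.le_refl a⟩) d hd
  -- LOIso between past restriction and Y restriction
  have hLa : ∀ a, LOIso (restrict r (past r a) (past_down r a))
      (restrict s (Y a) (hYdown a)) := by
    intro a
    exact ⟨g a, hgo a, hgl a⟩
  -- injectivity of mval
  have hinj : Function.Injective mval := by
    intro a b hab
    have hYeq : Y a = Y b := by rw [hpasteq a, hpasteq b, hab]
    exact h2 a b ((hLa a).trans ((restrict_congr_loiso hYeq (hYdown a) (hYdown b)).trans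
      (hLa b).symm))
  have hsurj : Function.Surjective mval := by
    intro b
    obtain ⟨a, ha⟩ := m.surj b
    exact ⟨a, Option.some_injective _ ((hval a).symm.trans ha)⟩
  have hord : ∀ a b, r.le a b ↔ s.le (mval a) (mval b) := by
    intro a b
    constructor
    · intro h
      exact hmax b (mval a) (hYmem b ⟨a, h⟩)
    · intro h
      have : mval a ∈ Y b := by rw [hpasteq b]; exact h
      obtain ⟨e, he, hme⟩ := this
      have : mval e = mval a := Option.some_injective _ ((hval e).symm.trans hme)
      have := hinj this
      rw [← this]
      exact he
  have hlab : ∀ a, r.ρ a = s.ρ (mval a) := fun a => m.commutes a _ (hval a)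
  exact equiv_is_iso m (Equiv.ofBijective mval ⟨hinj, hsurj⟩) hval hord hlab

end AuxER
namespace AuxER

variable {A : Type u} {C : ConfigFamily A}

theorem prime_finite {p : Realisation C} (hp : p.HasTop) : Finite p.carrier := by
  obtain ⟨t, ht⟩ := hp
  have : (Set.univ : Set p.carrier).Finite :=
    (p.finPast t).subset (fun e _ => ht e)
  exact Set.finite_univ_iff.mp this

theorem restrict_univ_loiso (r : Realisation C) (h : r.IsDown Set.univ) :
    LOIso (restrict r Set.univ h) r :=
  ⟨Equiv.Set.univ _, fun a b => Iff.rfl, fun a => rfl⟩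

theorem realiso_refl (r : Realisation C) : RealIso r r := loiso_realiso (LOIso.refl r)

/-- `⪯` is antisymmetric on the chosen primes. -/
theorem erLe_antisymm {P : Set (Realisation C)} (hP : erChoice P) (p q : ↥P)
    (h1 : erLe P p q) (h2 : erLe P q p) : p = q := by
  obtain ⟨m⟩ := h1
  obtain ⟨m'⟩ := h2
  have hqprime := hP.1 q.val q.2
  have hpprime := hP.1 p.val p.2
  haveI hqfin : Finite q.val.carrier := prime_finite hqprime.2
  haveI hpfin : Finite p.val.carrier := prime_finite hpprime.2
  obtain ⟨a, hLa⟩ := ext_proj_top hqprime.1 m hpprime.2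
  obtain ⟨b, hLb⟩ := ext_proj_top hpprime.1 m' hqprime.2
  -- cardinalities
  obtain ⟨ga, -, -⟩ := id hLa
  obtain ⟨gb, -, -⟩ := id hLb
  have hc1 : (past q.val a).ncard = Nat.card p.val.carrier := by
    rw [← Nat.card_coe_set_eq]
    exact Nat.card_congr ga
  have hc2 : (past p.val b).ncard = Nat.card q.val.carrier := by
    rw [← Nat.card_coe_set_eq]
    exact Nat.card_congr gb
  have hle1 : (past q.val a).ncard ≤ Nat.card q.val.carrier := by
    rw [← Set.ncard_univ]
    exact Set.ncard_le_ncard (Set.subset_univ _) Set.finite_univ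
  have hle2 : (past p.val b).ncard ≤ Nat.card p.val.carrier := by
    rw [← Set.ncard_univ]
    exact Set.ncard_le_ncard (Set.subset_univ _) Set.finite_univ
  have heq : (past q.val a).ncard = Nat.card q.val.carrier := by omega
  have hpa : past q.val a = Set.univ := by
    apply Set.eq_of_subset_of_ncard_le (Set.subset_univ _) _ Set.finite_univ
    rw [Set.ncard_univ, heq]
  have hL : LOIso q.val p.val := by
    refine LOIso.trans ?_ hLa
    refine LOIso.trans (restrict_univ_loiso q.val (fun _ _ _ _ => trivial)).symm ?_
    exact restrict_congr_loiso hpa.symm _ _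
  obtain ⟨z, _, hz⟩ := hP.2 p.val hpprime
  have e1 : q.val = z := hz q.val ⟨q.2, loiso_realiso hL⟩
  have e2 : p.val = z := hz p.val ⟨p.2, realiso_refl p.val⟩
  exact (Subtype.ext (e1.trans e2.symm)).symm

/-! ### Encoding finite realisations in `Type u` -/

def ACode (A : Type u) : Type u := Σ _n : ℕ, ((Fin _n → Fin _n → Prop) × (Fin _n → A))

def enc (q : Realisation C) : Set (ACode A) :=
  {c | ∃ e : Fin c.1 ≃ q.carrier,
    (∀ i j, c.2.1 i j ↔ q.le (e i) (e j)) ∧ (∀ i, c.2.2 i = q.ρ (e i))}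

theorem enc_nonempty (q : Realisation C) [Finite q.carrier] : (enc q).Nonempty := by
  obtain ⟨n, ⟨e⟩⟩ := Finite.exists_equiv_fin q.carrier
  refine ⟨⟨n, fun i j => q.le (e.symm i) (e.symm j), fun i => q.ρ (e.symm i)⟩,
    e.symm, fun i j => Iff.rfl, fun i => rfl⟩

theorem enc_loiso {q q' : Realisation C} {c : ACode A} (h : c ∈ enc q) (h' : c ∈ enc q') :
    LOIso q q' := by
  obtain ⟨e, he, hel⟩ := h
  obtain ⟨e', he', hel'⟩ := h'
  refine ⟨e.symm.trans e', fun a b => ?_, fun a => ?_⟩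
  · have h1 := he (e.symm a) (e.symm b)
    rw [e.apply_symm_apply, e.apply_symm_apply] at h1
    exact h1.symm.trans (he' (e.symm a) (e.symm b))
  · have h1 := hel (e.symm a)
    rw [e.apply_symm_apply] at h1
    exact h1.symm.trans (hel' (e.symm a))

end AuxER
namespace AuxER

variable {A : Type u} {C : ConfigFamily A}

theorem part1 {P : Set (Realisation C)} (hP : erChoice P) (eqA : A → A → Prop)
    {mx : ↥P → A} (hmx : erMax mx) {r : Realisation C} (hr : r.Extremal) :
    {p : ↥P | Nonempty (RealMap r p.val)} ∈ Cfgs (erData P eqA mx) := by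
  obtain ⟨φ, hinj, hmap, hrange, horder, hlab, hpastiso⟩ := core hP hmx hr
  constructor
  · -- down-closed
    intro q hq p hpq
    obtain ⟨mq⟩ := hq
    obtain ⟨mpq⟩ := hpq
    exact ⟨comp mq mpq⟩
  · -- consistency of finite subsets
    intro X hX hXfin
    refine ⟨hXfin, ?_⟩
    set S : Set ↥P := {p | ∃ q ∈ X, erLe P p q} with hS
    set w : Set r.carrier := {a | ∃ q ∈ X, erLe P (φ a) q} with hw
    have hSw : S = φ '' w := by
      apply Set.Subset.antisymm
      · rintro p ⟨q, hq, hpq⟩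
        have hpθ : p ∈ {p : ↥P | Nonempty (RealMap r p.val)} := by
          obtain ⟨mq⟩ := hX hq
          obtain ⟨mpq⟩ := hpq
          exact ⟨comp mq mpq⟩
        rw [hrange] at hpθ
        obtain ⟨a, rfl⟩ := hpθ
        exact ⟨a, ⟨q, hq, hpq⟩, rfl⟩
      · rintro _ ⟨a, ⟨q, hq, hq2⟩, rfl⟩
        exact ⟨q, hq, hq2⟩
    have hwdown : r.IsDown w := by
      rintro a ⟨q, hq, haq⟩ b hba
      refine ⟨q, hq, ?_⟩
      obtain ⟨m1⟩ := haq
      obtain ⟨m2⟩ := (horder b a).mpr hba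
      exact ⟨comp m1 m2⟩
    have himg : mx '' S = r.ρ '' w := by
      rw [hSw, Set.image_image]
      exact Set.image_congr (fun a _ => hlab a)
    rw [himg]
    exact r.real w hwdown

theorem part2_hard {P : Set (Realisation C)} (hP : erChoice P)
    {mx : ↥P → A} (hmx : erMax mx) {r r' : Realisation C}
    (hr : r.Extremal) (hr' : r'.Extremal)
    (hsub : {p : ↥P | Nonempty (RealMap r' p.val)} ⊆
      {p : ↥P | Nonempty (RealMap r p.val)}) :
    Nonempty (RealMap r r') := by
  obtain ⟨φ, hinj, hmap, hrange, horder, hlab, hpastiso⟩ := core hP hmx hr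
  obtain ⟨φ', hinj', hmap', hrange', horder', hlab', hpastiso'⟩ := core hP hmx hr'
  refine ⟨{ f := fun a => if h : ∃ b, φ' b = φ a then some h.choose else none
            surj := ?_, presDown := ?_, commutes := ?_ }⟩
  · intro b
    have hb : φ' b ∈ {p : ↥P | Nonempty (RealMap r p.val)} := by
      apply hsub
      rw [hrange']
      exact ⟨b, rfl⟩
    rw [hrange] at hb
    obtain ⟨a, ha⟩ := hb
    have hex : ∃ b', φ' b' = φ a := ⟨b, ha.symm⟩
    refine ⟨a, ?_⟩
    show (if h : ∃ b', φ' b' = φ a then some h.choose else none) = some b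
    rw [dif_pos hex]
    congr 1
    exact hinj' (hex.choose_spec.trans ha)
  · intro y hy β hβ γ hγ
    obtain ⟨a, hay, hfa⟩ := hβ
    replace hfa : (if h : ∃ b, φ' b = φ a then some h.choose else none) = some β := hfa
    by_cases hex : ∃ b, φ' b = φ a
    swap
    · rw [dif_neg hex] at hfa; exact absurd hfa (by simp)
    rw [dif_pos hex] at hfa
    have hβeq : φ' β = φ a := by
      have := hex.choose_spec
      rwa [Option.some_injective _ hfa] at this
    -- φ' γ ⪯ φ' β = φ a, so φ' γ ∈ range φ
    obtain ⟨m1⟩ := (horder' γ β).mpr hγ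
    have hγθ : φ' γ ∈ {p : ↥P | Nonempty (RealMap r p.val)} := by
      obtain ⟨m2⟩ := hmap a
      refine ⟨comp m2 ?_⟩
      rw [← hβeq]
      exact m1
    rw [hrange] at hγθ
    obtain ⟨a', ha'⟩ := hγθ
    have ha'le : r.le a' a := by
      apply (horder a' a).mp
      rw [ha', ← hβeq]
      exact ⟨m1⟩
    have ha'y : a' ∈ y := hy a hay a' ha'le
    refine ⟨a', ha'y, ?_⟩
    have hex' : ∃ b, φ' b = φ a' := ⟨γ, ha'.symm⟩
    show (if h : ∃ b, φ' b = φ a' then some h.choose else none) = some γ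
    rw [dif_pos hex']
    congr 1
    exact hinj' (hex'.choose_spec.trans ha')
  · intro a β h
    replace h : (if h : ∃ b, φ' b = φ a then some h.choose else none) = some β := h
    by_cases hex : ∃ b, φ' b = φ a
    swap
    · rw [dif_neg hex] at h; exact absurd h (by simp)
    rw [dif_pos hex] at h
    have hβeq : φ' β = φ a := by
      have := hex.choose_spec
      rwa [Option.some_injective _ h] at this
    rw [← hlab a, ← hβeq, hlab' β]

end AuxER
namespace AuxER

variable {A : Type u} {C : ConfigFamily A}

theorem part3 {P : Set (Realisation C)} (hP : erChoice P) (eqA : A → A → Prop)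
    {mx : ↥P → A} (hmx : erMax mx) (x : Set ↥P) (hx : x ∈ Cfgs (erData P eqA mx)) :
    ∃ r : Realisation C, r.Extremal ∧
      {p : ↥P | Nonempty (RealMap r p.val)} = x ∧
      ∃ e : ↥x ≃ r.carrier,
        (∀ p q : ↥x, erLe P p.val q.val ↔ r.le (e p) (e q)) ∧
        ∀ p : ↥x, r.ρ (e p) = mx p.val := by
  obtain ⟨hxdown, hxcon⟩ := hx
  have hdn : ∀ p ∈ x, ∀ q : ↥P, erLe P q p → q ∈ x := hxdown
  -- encoding into Type u
  set E : ↥x → Set (ACode A) := fun q => enc q.1.1 with hE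
  have hEinj : Function.Injective E := by
    intro q q' h
    have hq1 := hP.1 q.1.1 q.1.2
    have hq'1 := hP.1 q'.1.1 q'.1.2
    haveI := prime_finite hq1.2
    obtain ⟨c, hc⟩ := enc_nonempty q.1.1
    have hc' : c ∈ enc q'.1.1 := by
      have h2 : enc q.1.1 = enc q'.1.1 := h
      rw [← h2]; exact hc
    have hL : LOIso q.1.1 q'.1.1 := enc_loiso hc hc'
    obtain ⟨z, _, hz⟩ := hP.2 q'.1.1 hq'1
    have e1 : q.1.1 = z := hz q.1.1 ⟨q.1.2, loiso_realiso hL⟩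
    have e2 : q'.1.1 = z := hz q'.1.1 ⟨q'.1.2, realiso_refl q'.1.1⟩
    exact Subtype.ext (Subtype.ext (e1.trans e2.symm))
  set e0 : ↥x ≃ ↥(Set.range E) := Equiv.ofInjective E hEinj with he0
  set dn : ↥(Set.range E) → ↥P := fun c => (e0.symm c).1 with hdnd
  have dn_e0 : ∀ z : ↥x, dn (e0 z) = z.1 := by
    intro z
    show (e0.symm (e0 z)).1 = z.1
    rw [e0.symm_apply_apply]
  have dninj : Function.Injective dn := by
    intro c d h
    exact e0.symm.injective (Subtype.ext h)
  have dnx : ∀ c, dn c ∈ x := fun c => (e0.symm c).2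
  -- the realisation
  set R : Realisation C :=
    { carrier := ↥(Set.range E)
      le := fun c d => erLe P (dn c) (dn d)
      le_refl := fun c => ⟨idMap _⟩
      le_trans := by
        rintro c d e ⟨m1⟩ ⟨m2⟩
        exact ⟨comp m2 m1⟩
      le_antisymm := by
        intro c d h1 h2
        exact dninj (erLe_antisymm hP _ _ h1 h2)
      finPast := by
        intro c
        have hprime := hP.1 (dn c).1 (dn c).2
        obtain ⟨φc, _, _, hrangec, _, _, _⟩ := core hP hmx hprime.1
        haveI := prime_finite hprime.2
        have hfin : {p : ↥P | Nonempty (RealMap (dn c).1 p.val)}.Finite := by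
          rw [hrangec]; exact Set.finite_range φc
        have heq : {c' | erLe P (dn c') (dn c)} =
            dn ⁻¹' {p : ↥P | Nonempty (RealMap (dn c).1 p.val)} := rfl
        rw [heq]
        exact Set.Finite.preimage (dninj.injOn) hfin
      ρ := fun c => mx (dn c)
      real := by
        intro y hy
        set Y : Set ↥P := dn '' y with hYd
        have hYx : Y ⊆ x := by rintro _ ⟨c, _, rfl⟩; exact dnx c
        have hYdown : ∀ q ∈ Y, ∀ q' : ↥P, erLe P q' q → q' ∈ Y := by
          rintro q ⟨c, hc, rfl⟩ q' hq'
          have hq'x : q' ∈ x := hdn (dn c) (dnx c) q' hq'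
          refine ⟨e0 ⟨q', hq'x⟩, ?_, dn_e0 ⟨q', hq'x⟩⟩
          apply hy c hc
          show erLe P (dn (e0 ⟨q', hq'x⟩)) (dn c)
          rw [dn_e0]
          exact hq'
        have himg : (fun c => mx (dn c)) '' y = mx '' Y := by
          rw [hYd, Set.image_image]
        rw [himg]
        set 𝒳 : Set (Set A) :=
          (fun X : Set ↥P => mx '' {p | ∃ q ∈ X, erLe P p q}) ''
            {X | X ⊆ Y ∧ X.Finite} with h𝒳
        have h𝒳F : 𝒳 ⊆ C.F := by
          rintro _ ⟨X, ⟨hXY, hXfin⟩, rfl⟩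
          exact (hxcon X (hXY.trans hYx) hXfin).2
        have hcompat : ∀ Z ⊆ 𝒳, Z.Finite → ∃ z ∈ C.F, ∀ u ∈ Z, u ⊆ z := by
          intro Z hZ hZfin
          have hwit : ∀ u : ↥Z, ∃ X : Set ↥P, (X ⊆ Y ∧ X.Finite) ∧
              mx '' {p | ∃ q ∈ X, erLe P p q} = u.1 := by
            intro u
            obtain ⟨X, hX1, hX2⟩ := hZ u.2
            exact ⟨X, hX1, hX2⟩
          choose W hW1 hW2 using hwit
          haveI := hZfin.to_subtype
          set U : Set ↥P := ⋃ u : ↥Z, W u with hU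
          have hUY : U ⊆ Y := by
            intro p hp
            obtain ⟨u, hu⟩ := Set.mem_iUnion.mp hp
            exact (hW1 u).1 hu
          have hUfin : U.Finite := Set.finite_iUnion (fun u => (hW1 u).2)
          refine ⟨mx '' {p | ∃ q ∈ U, erLe P p q},
            (hxcon U (hUY.trans hYx) hUfin).2, ?_⟩
          intro u hu
          have h3 : mx '' {p | ∃ q ∈ W ⟨u, hu⟩, erLe P p q} = u := hW2 ⟨u, hu⟩
          rw [← h3]
          apply Set.image_mono
          rintro p ⟨q, hq, hpq⟩
          exact ⟨q, Set.mem_iUnion.mpr ⟨⟨u, hu⟩, hq⟩, hpq⟩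
        have hsU : ⋃₀ 𝒳 = mx '' Y := by
          apply Set.Subset.antisymm
          · rintro v ⟨_, ⟨X, ⟨hXY, _⟩, rfl⟩, hv⟩
            obtain ⟨p, ⟨q, hq, hpq⟩, rfl⟩ := hv
            exact ⟨p, hYdown q (hXY hq) p hpq, rfl⟩
          · rintro _ ⟨q, hq, rfl⟩
            refine ⟨mx '' {p | ∃ q' ∈ ({q} : Set ↥P), erLe P p q'},
              ⟨{q}, ⟨Set.singleton_subset_iff.mpr hq, Set.finite_singleton q⟩, rfl⟩, ?_⟩
            exact ⟨q, ⟨q, rfl, ⟨idMap _⟩⟩, rfl⟩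
        have := C.unionClosed 𝒳 h𝒳F hcompat
        rwa [hsU] at this }
    with hR
  -- each past of R is isomorphic to the corresponding prime
  have pastiso : ∀ c : R.carrier, LOIso (dn c).1
      (restrict R (past R c) (past_down R c)) := by
    intro c
    have hprime := hP.1 (dn c).1 (dn c).2
    obtain ⟨φc, hinjc, hmapc, hrangec, horderc, hlabc, -⟩ := core hP hmx hprime.1
    have hφcx : ∀ a, φc a ∈ x := fun a => hdn (dn c) (dnx c) (φc a) (hmapc a)
    have hφcle : ∀ a, R.le (e0 ⟨φc a, hφcx a⟩) c := by
      intro a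
      show erLe P (dn (e0 ⟨φc a, hφcx a⟩)) (dn c)
      rw [dn_e0]
      exact hmapc a
    set fwd : (dn c).1.carrier → ↥(past R c) :=
      fun a => ⟨e0 ⟨φc a, hφcx a⟩, hφcle a⟩ with hfwd
    have hfwdinj : Function.Injective fwd := by
      intro a b h
      have h1 : e0 ⟨φc a, hφcx a⟩ = e0 ⟨φc b, hφcx b⟩ := Subtype.mk_eq_mk.mp h
      exact hinjc (Subtype.mk_eq_mk.mp (e0.injective h1))
    have hfwdsurj : Function.Surjective fwd := by
      intro d
      have hd2 : erLe P (dn d.1) (dn c) := d.2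
      have hmem : dn d.1 ∈ Set.range φc := by
        rw [← hrangec]; exact hd2
      obtain ⟨a, ha⟩ := hmem
      refine ⟨a, Subtype.ext ?_⟩
      show e0 ⟨φc a, hφcx a⟩ = d.1
      have h2 : (⟨φc a, hφcx a⟩ : ↥x) = e0.symm d.1 := Subtype.ext ha
      rw [h2, e0.apply_symm_apply]
    refine ⟨Equiv.ofBijective fwd ⟨hfwdinj, hfwdsurj⟩, ?_, ?_⟩
    · intro a b
      rw [← horderc a b]
      constructor
      · intro h
        show erLe P (dn (e0 ⟨φc a, hφcx a⟩)) (dn (e0 ⟨φc b, hφcx b⟩))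
        rw [dn_e0, dn_e0]
        exact h
      · intro h
        have h2 : erLe P (dn (e0 ⟨φc a, hφcx a⟩)) (dn (e0 ⟨φc b, hφcx b⟩)) := h
        rwa [dn_e0, dn_e0] at h2
    · intro a
      show (dn c).1.ρ a = mx (dn (e0 ⟨φc a, hφcx a⟩))
      rw [dn_e0]
      exact (hlabc a).symm
  -- extremality
  have hRext : R.Extremal := by
    apply extremal_of_parts
    · intro c
      exact loiso_extremal (pastiso c) (hP.1 (dn c).1 (dn c).2).1
    · intro c d h
      have hL : LOIso (dn c).1 (dn d).1 := ((pastiso c).trans h).trans (pastiso d).symm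
      obtain ⟨z, _, hz⟩ := hP.2 (dn d).1 (hP.1 (dn d).1 (dn d).2)
      have e1 : (dn c).1 = z := hz (dn c).1 ⟨(dn c).2, loiso_realiso hL⟩
      have e2 : (dn d).1 = z := hz (dn d).1 ⟨(dn d).2, realiso_refl _⟩
      exact dninj (Subtype.ext (e1.trans e2.symm))
  -- θ R = x
  have hθ : {p : ↥P | Nonempty (RealMap R p.val)} = x := by
    apply Set.Subset.antisymm
    · rintro p ⟨m⟩
      obtain ⟨φR, hinjR, hmapR, hrangeR, horderR, hlabR, hpastR⟩ := core hP hmx hRext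
      have hpm : p ∈ Set.range φR := by rw [← hrangeR]; exact ⟨m⟩
      obtain ⟨c, rfl⟩ := hpm
      have hL : LOIso (φR c).1 (dn c).1 :=
        (realiso_loiso (hpastR c)).trans (pastiso c).symm
      obtain ⟨z, _, hz⟩ := hP.2 (dn c).1 (hP.1 (dn c).1 (dn c).2)
      have e1 : (φR c).1 = z := hz _ ⟨(φR c).2, loiso_realiso hL⟩
      have e2 : (dn c).1 = z := hz _ ⟨(dn c).2, realiso_refl _⟩
      have heq : φR c = dn c := Subtype.ext (e1.trans e2.symm)
      rw [heq]
      exact dnx c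
    · intro p hp
      set c : R.carrier := e0 ⟨p, hp⟩ with hc
      obtain ⟨g, hgo, hgl⟩ := (pastiso c).symm
      have hdnc : dn c = p := dn_e0 ⟨p, hp⟩
      rw [← hdnc]
      exact ⟨comp (projMap R (past R c) (past_down R c)) (equivMap g hgo hgl)⟩
  refine ⟨R, hRext, hθ, e0, ?_, ?_⟩
  · intro p q
    show erLe P p.1 q.1 ↔ erLe P (dn (e0 p)) (dn (e0 q))
    rw [dn_e0, dn_e0]
  · intro p
    show mx (dn (e0 p)) = mx p.1
    rw [dn_e0]

end AuxER
/-- The configurations of the causal unfolding `er(A)`, ordered by inclusion,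
are order-isomorphic to the order of extremal realisations: the assignment
`θ r = {p ∈ P : p ⪯ r}` sends extremal realisations to configurations,
preserves and reflects the order, and every configuration `x` arises as `θ r`
for an extremal realisation `r` isomorphic to the realisation with carrier
`(x, ⪯)` and function `max`. -/
theorem stmt9 {A : Type u} (C : ConfigFamily A) (eqA : A → A → Prop)
    (heq : Equivalence eqA) (P : Set (Realisation C)) (hP : erChoice P)
    (mx : ↥P → A) (hmx : erMax mx) :
    (∀ r : Realisation C, r.Extremal →
        {p : ↥P | Nonempty (RealMap r p.val)} ∈ Cfgs (erData P eqA mx)) ∧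
    (∀ r r' : Realisation C, r.Extremal → r'.Extremal →
        (Nonempty (RealMap r r') ↔
          {p : ↥P | Nonempty (RealMap r' p.val)} ⊆
            {p : ↥P | Nonempty (RealMap r p.val)})) ∧
    (∀ x ∈ Cfgs (erData P eqA mx), ∃ r : Realisation C, r.Extremal ∧
        {p : ↥P | Nonempty (RealMap r p.val)} = x ∧
        ∃ e : ↥x ≃ r.carrier,
          (∀ p q : ↥x, erLe P p.val q.val ↔ r.le (e p) (e q)) ∧
          ∀ p : ↥x, r.ρ (e p) = mx p.val) := by
  refine ⟨?_, ?_, ?_⟩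
  · intro r hr
    exact AuxER.part1 hP eqA hmx hr
  · intro r r' hr hr'
    constructor
    · rintro ⟨m⟩ p hp
      obtain ⟨m'⟩ := hp
      exact ⟨AuxER.comp m m'⟩
    · exact AuxER.part2_hard hP hmx hr hr'
  · intro x hx
    exact AuxER.part3 hP eqA hmx x hx
end AuxER
end
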